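/- arXiv:1108.1661 — 6 statements merged into one kernel-verified Lean document; each statement's English description precedes it below -/
import Mathlib

section
/- Under the standing hypotheses, the center of S (regarded as a subgroup of G) equals Z, the normalizer N_G(S) is contained in M, and S is a Sylow 3-subgroup of G. -/
section Aux
variable {G : Type*} [Group G]

lemma myCentralizerLeNormalizer (Z : Subgroup G) :
    Subgroup.centralizer (Z : Set G) ≤ Subgroup.normalizer (Z : Set G) := by
  intro c hc
  rw [Subgroup.mem_normalizer_iff]
  intro z
  constructor
  · intro hz
    have h := Subgroup.mem_centralizer_iff.mp hc z hz
    have : c * z * c⁻¹ = z := by rw [← h]; group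
    rw [this]; exact hz
  · intro hz
    have h := Subgroup.mem_centralizer_iff.mp hc _ hz
    have h2 : c * z = c * (c * z * c⁻¹) := by
      calc c * z = (c * z * c⁻¹) * c := by group
      _ = c * (c * z * c⁻¹) := h
    have : z = c * z * c⁻¹ := mul_left_cancel h2
    rw [this]; exact hz

lemma myMapCenter (H : Subgroup G) :
    Subgroup.map H.subtype (Subgroup.center H) = H ⊓ Subgroup.centralizer (H : Set G) := by
  ext x
  simp only [Subgroup.mem_map, Subgroup.mem_inf, Subgroup.mem_centralizer_iff]
  constructor
  · rintro ⟨⟨y, hy⟩, hyc, rfl⟩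
    refine ⟨hy, fun h hh => ?_⟩
    have := (Subgroup.mem_center_iff.mp hyc) ⟨h, hh⟩
    exact congrArg Subtype.val this
  · rintro ⟨hx, hc⟩
    refine ⟨⟨x, hx⟩, Subgroup.mem_center_iff.mpr fun ⟨h, hh⟩ => ?_, rfl⟩
    exact Subtype.ext (hc h hh)

lemma myPElemCentralizes [Finite G] (Z : Subgroup G) (hZcard : Nat.card Z = 3)
    (p : G) (hpM : p ∈ Subgroup.normalizer (Z : Set G)) (k : ℕ) (hpk : p ^ (3 : ℕ) ^ k = 1) :
    p ∈ Subgroup.centralizer (Z : Set G) := by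
  haveI : Fact (Nat.Prime 3) := ⟨by norm_num⟩
  set M := Subgroup.normalizer (Z : Set G)
  have hZM : Z ≤ M := Subgroup.le_normalizer
  set ZM := Z.subgroupOf M with hZMdef
  have hcard : Nat.card ZM = 3 := by
    rw [Nat.card_congr (Subgroup.subgroupOfEquivOfLe hZM).toEquiv]; exact hZcard
  haveI : IsCyclic ZM := isCyclic_of_prime_card hcard
  haveI : Finite ZM := Nat.finite_of_card_ne_zero (by rw [hcard]; norm_num)
  haveI : Finite (MulAut ZM) := Finite.of_injective (fun e => (e : ZM → ZM))
    DFunLike.coe_injective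
  have hAut : Nat.card (MulAut ZM) = 2 := by
    rw [IsCyclic.card_mulAut, hcard]; decide
  set pm : M := ⟨p, hpM⟩ with hpmdef
  set φ := MulAut.conjNormal (H := ZM) pm with hφ
  have hφpow : φ ^ (3 : ℕ) ^ k = 1 := by
    have : pm ^ (3:ℕ) ^ k = 1 := by
      ext; push_cast; exact hpk
    rw [hφ, ← map_pow, this, map_one]
  have h1 : orderOf φ ∣ 3 ^ k := orderOf_dvd_of_pow_eq_one hφpow
  have h2 : orderOf φ ∣ 2 := hAut ▸ orderOf_dvd_natCard φ
  have hco : Nat.Coprime (3 ^ k) 2 := Nat.Coprime.pow_left k (by decide)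
  have : orderOf φ = 1 := Nat.eq_one_of_dvd_coprimes hco h1 h2
  have hφ1 : φ = 1 := orderOf_eq_one_iff.mp this
  rw [Subgroup.mem_centralizer_iff]
  intro z hz
  have hzM : z ∈ M := hZM hz
  have hzZM : (⟨z, hzM⟩ : M) ∈ ZM := by
    simp only [hZMdef, Subgroup.mem_subgroupOf]; exact hz
  have happ : ↑(φ (⟨⟨z, hzM⟩, hzZM⟩ : ZM)) = pm * ⟨z, hzM⟩ * pm⁻¹ :=
    MulAut.conjNormal_apply _ _
  rw [hφ1] at happ
  have : (⟨z, hzM⟩ : M) = pm * ⟨z, hzM⟩ * pm⁻¹ := happ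
  have hG : z = p * z * p⁻¹ := congrArg Subtype.val this
  calc z * p = (p * z * p⁻¹) * p := by rw [← hG]
  _ = p * z := by group

end Aux

lemma myMain {G : Type*} [Group G] [Finite G]
    (Z Q M P : Subgroup G)
    (hZcard : Nat.card Z = 3)
    (hM : M = Subgroup.normalizer (Z : Set G))
    (hQcent : Q ≤ Subgroup.centralizer (Z : Set G))
    (hQnormM : ∀ m ∈ M, ∀ q ∈ Q, m * q * m⁻¹ ∈ Q)
    (hQcard : Nat.card Q = 3 ^ 5)
    (hQcenter : Q ⊓ Subgroup.centralizer (Q : Set G) = Z)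
    (hCMQ : M ⊓ Subgroup.centralizer (Q : Set G) ≤ Q)
    (S : Sylow 3 M)
    (hP : P = Subgroup.map M.subtype S.toSubgroup) :
    Subgroup.map P.subtype (Subgroup.center P) = Z ∧
    Subgroup.normalizer (P : Set G) ≤ M ∧
    ∃ T : Sylow 3 G, (T : Subgroup G) = P := by
  haveI : Fact (Nat.Prime 3) := ⟨by norm_num⟩
  have hZM : Z ≤ M := hM ▸ Subgroup.le_normalizer
  have hQM : Q ≤ M := hM ▸ le_trans hQcent (myCentralizerLeNormalizer Z)
  have hPM : P ≤ M := hP ▸ Subgroup.map_subtype_le _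
  have hPp : IsPGroup 3 P := hP ▸ S.isPGroup'.map _
  -- Q ≤ P
  have hQMp : IsPGroup 3 (Q.subgroupOf M) := IsPGroup.of_card (by
    rw [Nat.card_congr (Subgroup.subgroupOfEquivOfLe hQM).toEquiv, hQcard])
  haveI hQMn : (Q.subgroupOf M).Normal := ⟨by
    rintro ⟨q, hqM⟩ hq ⟨m, hmM⟩
    simp only [Subgroup.mem_subgroupOf] at hq ⊢
    exact hQnormM m hmM q hq⟩
  have hQS : Q.subgroupOf M ≤ S.toSubgroup := by
    have hsup : IsPGroup 3 ((S.toSubgroup ⊔ Q.subgroupOf M : Subgroup ↥M)) :=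
      S.isPGroup'.to_sup_of_normal_right hQMp
    have heq := S.is_maximal' hsup le_sup_left
    rw [← heq]; exact le_sup_right
  have hQP : Q ≤ P := by
    have h := Subgroup.map_mono (f := M.subtype) hQS
    rw [Subgroup.subgroupOf_map_subtype, inf_eq_left.mpr hQM, ← hP] at h
    exact h
  -- P centralizes Z
  have hPC : P ≤ Subgroup.centralizer (Z : Set G) := by
    intro p hp
    obtain ⟨k, hk⟩ := hPp ⟨p, hp⟩
    have hpk : p ^ (3:ℕ) ^ k = 1 := by
      have := congrArg Subtype.val hk; push_cast at this; exact this
    exact myPElemCentralizes Z hZcard p (hM ▸ hPM hp) k hpk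
  have hZQ : Z ≤ Q := hQcenter ▸ inf_le_left
  have hZP : Z ≤ P := hZQ.trans hQP
  -- center of P is Z
  have hZc : Subgroup.map P.subtype (Subgroup.center P) = Z := by
    rw [myMapCenter]
    apply le_antisymm
    · intro x hx
      obtain ⟨hxP, hxCP⟩ := Subgroup.mem_inf.mp hx
      have hxCQ : x ∈ Subgroup.centralizer (Q : Set G) :=
        Subgroup.centralizer_le (fun q hq => hQP hq) hxCP
      have hxQ : x ∈ Q := hCMQ (Subgroup.mem_inf.mpr ⟨hPM hxP, hxCQ⟩)
      exact hQcenter ▸ Subgroup.mem_inf.mpr ⟨hxQ, hxCQ⟩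
    · intro z hz
      refine Subgroup.mem_inf.mpr ⟨hZP hz, Subgroup.mem_centralizer_iff.mpr fun h hh => ?_⟩
      exact (Subgroup.mem_centralizer_iff.mp (hPC hh) z hz).symm
  -- normalizer of P contained in M
  have hNorm : ∀ g ∈ Subgroup.normalizer (P : Set G), ∀ z ∈ Z, g * z * g⁻¹ ∈ Z := by
    intro g hg z hz
    rw [← hZc, myMapCenter] at hz ⊢
    obtain ⟨hzP, hzC⟩ := Subgroup.mem_inf.mp hz
    refine Subgroup.mem_inf.mpr ⟨(Subgroup.mem_normalizer_iff.mp hg z).mp hzP, ?_⟩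
    rw [Subgroup.mem_centralizer_iff]
    intro h hh
    have hx : g⁻¹ * h * g ∈ P := by
      apply (Subgroup.mem_normalizer_iff.mp hg (g⁻¹ * h * g)).mpr
      have he : g * (g⁻¹ * h * g) * g⁻¹ = h := by group
      rw [he]; exact hh
    have hcomm : (g⁻¹ * h * g) * z = z * (g⁻¹ * h * g) :=
      Subgroup.mem_centralizer_iff.mp hzC _ hx
    calc h * (g * z * g⁻¹) = g * ((g⁻¹ * h * g) * z) * g⁻¹ := by group
    _ = g * (z * (g⁻¹ * h * g)) * g⁻¹ := by rw [hcomm]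
    _ = (g * z * g⁻¹) * h := by group
  have hNP : Subgroup.normalizer (P : Set G) ≤ M := by
    intro g hg
    rw [hM]
    rw [Subgroup.mem_normalizer_iff]
    intro z
    constructor
    · exact fun hz => hNorm g hg z hz
    · intro hz
      have h := hNorm g⁻¹ (inv_mem hg) _ hz
      have he : g⁻¹ * (g * z * g⁻¹) * g⁻¹⁻¹ = z := by group
      rwa [he] at h
  -- P is Sylow in G
  obtain ⟨T, hPT⟩ := hPp.exists_le_sylow
  have hTP : (T : Subgroup G) = P := by
    haveI : Group.IsNilpotent (T : Subgroup G) := T.isPGroup'.isNilpotent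
    have hNC := normalizerCondition_of_isNilpotent (G := (T : Subgroup G))
    rw [normalizerCondition_iff_only_full_group_self_normalizing] at hNC
    have hKtop : P.subgroupOf T = ⊤ := by
      apply hNC
      apply le_antisymm ?_ Subgroup.le_normalizer
      intro t ht
      rw [Subgroup.mem_subgroupOf]
      have htN : (t : G) ∈ Subgroup.normalizer (P : Set G) := by
        rw [Subgroup.mem_normalizer_iff]
        intro x
        constructor
        · intro hx
          have hxT : x ∈ (T : Subgroup G) := hPT hx
          have hx' : (⟨x, hxT⟩ : (T : Subgroup G)) ∈ P.subgroupOf T := hx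
          have h2 := (Subgroup.mem_normalizer_iff.mp ht ⟨x, hxT⟩).mp hx'
          rw [Subgroup.mem_subgroupOf] at h2
          exact h2
        · intro hx
          have hxT : x ∈ (T : Subgroup G) := by
            have h1 : (t:G) * x * (t:G)⁻¹ ∈ (T:Subgroup G) := hPT hx
            have h2 := mul_mem (mul_mem (inv_mem t.2) h1) t.2
            have he : (t:G)⁻¹ * ((t:G) * x * (t:G)⁻¹) * (t:G) = x := by group
            rwa [he] at h2
          have h3 : t * (⟨x, hxT⟩ : (T : Subgroup G)) * t⁻¹ ∈ P.subgroupOf T := by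
            rw [Subgroup.mem_subgroupOf]
            exact hx
          have h4 := (Subgroup.mem_normalizer_iff.mp ht ⟨x, hxT⟩).mpr h3
          exact h4
      have htM : (t : G) ∈ M := hNP htN
      obtain ⟨k, hk⟩ := T.isPGroup' t
      have htpow : (t : G) ^ (3:ℕ) ^ k = 1 := by
        have := congrArg Subtype.val hk; push_cast at this; exact this
      obtain ⟨j, hjk, hoj⟩ := (Nat.dvd_prime_pow (by norm_num)).mp
        (orderOf_dvd_of_pow_eq_one htpow)
      have hzp : IsPGroup 3 (Subgroup.zpowers (t : G)) := IsPGroup.of_card (by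
        rw [Nat.card_zpowers, hoj])
      have hsup : IsPGroup 3 ((Subgroup.zpowers (t:G) ⊔ P : Subgroup G)) :=
        hzp.to_sup_of_normal_right' hPp (by rwa [Subgroup.zpowers_le])
      have hpb : IsPGroup 3 ((Subgroup.zpowers (t:G) ⊔ P).subgroupOf M) :=
        hsup.comap_subtype
      have hSle : S.toSubgroup ≤ (Subgroup.zpowers (t:G) ⊔ P).subgroupOf M := by
        intro s hs
        rw [Subgroup.mem_subgroupOf]
        exact Subgroup.mem_sup_right (hP ▸ Subgroup.mem_map_of_mem _ hs)
      have hSeq := S.is_maximal' hpb hSle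
      have htSup : (⟨(t:G), htM⟩ : M) ∈ (Subgroup.zpowers (t:G) ⊔ P).subgroupOf M := by
        rw [Subgroup.mem_subgroupOf]
        exact Subgroup.mem_sup_left (Subgroup.mem_zpowers _)
      rw [hSeq] at htSup
      rw [hP]
      exact ⟨⟨(t:G), htM⟩, htSup, rfl⟩
    have hle : (T : Subgroup G) ≤ P := by
      intro x hx
      have h := hKtop ▸ Subgroup.mem_top (⟨x, hx⟩ : ↥(T : Subgroup G))
      exact h
    exact le_antisymm hle hPT
  exact ⟨hZc, hNP, T, hTP⟩

/-- Under the standing hypotheses of the main theorem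
(`G` finite, `Z ≤ G` of order 3, `M = N_G(Z)`, `Q` an extraspecial normal
subgroup of `M` of order `3^5` with `Z(Q) = Z`, `C_M(Q) ≤ Q`, `Z(C_G(Z)) = Z`,
`R*/Q ≅ Q₈ × Q₈` for a normal subgroup `R*` of `C_G(Z)`, and `Z` not weakly
closed in `Q`), if `S` is a Sylow 3-subgroup of `M`, then the center of `S`
(as a subgroup of `G`) equals `Z`, `N_G(S) ≤ M`, and `S` is a Sylow
3-subgroup of `G`. -/
theorem stmt0 {G : Type*} [Group G] [Finite G]
    (Z Q Rstar : Subgroup G)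
    (hZcard : Nat.card Z = 3)
    (hQcent : Q ≤ Subgroup.centralizer (Z : Set G))
    (hQnormM : ∀ m ∈ (Subgroup.normalizer (Z : Set G)), ∀ q ∈ Q, m * q * m⁻¹ ∈ Q)
    (hQcard : Nat.card Q = 3 ^ 5)
    (hQcenter : Q ⊓ Subgroup.centralizer (Q : Set G) = Z)
    (hQcommutator : ⁅Q, Q⁆ = Z)
    (hQcube : ∀ q ∈ Q, q ^ 3 ∈ Z)
    (hCMQ : (Subgroup.normalizer (Z : Set G)) ⊓ Subgroup.centralizer (Q : Set G) ≤ Q)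
    (hZC : Subgroup.centralizer (Z : Set G) ⊓
      Subgroup.centralizer ((Subgroup.centralizer (Z : Set G) : Subgroup G) : Set G) = Z)
    (hQR : Q ≤ Rstar)
    (hRC : Rstar ≤ Subgroup.centralizer (Z : Set G))
    (hRnorm : ∀ c ∈ Subgroup.centralizer (Z : Set G), ∀ r ∈ Rstar, c * r * c⁻¹ ∈ Rstar)
    [hQRn : (Q.subgroupOf Rstar).Normal]
    (hRQiso : Nonempty ((Rstar ⧸ Q.subgroupOf Rstar) ≃* (QuaternionGroup 2 × QuaternionGroup 2)))
    (hwc : ∃ g : G, Subgroup.map (MulAut.conj g).toMonoidHom Z ≤ Q ∧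
      Subgroup.map (MulAut.conj g).toMonoidHom Z ≠ Z)
    (S : Sylow 3 (Subgroup.normalizer (Z : Set G))) :
    Subgroup.map (Subgroup.map (Subgroup.normalizer (Z : Set G)).subtype S.toSubgroup).subtype
        (Subgroup.center (Subgroup.map (Subgroup.normalizer (Z : Set G)).subtype S.toSubgroup)) = Z ∧
    Subgroup.normalizer ((Subgroup.map (Subgroup.normalizer (Z : Set G)).subtype S.toSubgroup : Subgroup G) : Set G) ≤ (Subgroup.normalizer (Z : Set G)) ∧
    ∃ T : Sylow 3 G, (T : Subgroup G) = Subgroup.map (Subgroup.normalizer (Z : Set G)).subtype S.toSubgroup :=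
  myMain Z Q (Subgroup.normalizer (Z : Set G)) _ hZcard rfl hQcent hQnormM hQcard hQcenter hCMQ S rfl
end

section
/- Let x ∈ G be an involution with x ∉ C_G(E), and suppose that for the unique non-trivial element e of Z(E), x is not conjugate to xe by any element of E. Then [E, x] ≤ C_E(x) and [E, x] is elementary abelian (every element of [E,x] has order dividing 2). -/
open scoped commutatorElement

/-- Let `E` be a finite extraspecial normal 2-subgroup of a group
`G` (so `Z(E) = E ∩ C_G(E)` has order 2, `[E,E] = Z(E)`, and squares of elements of
`E` lie in `Z(E)`).  Let `x ∈ G` be an involution not centralizing `E`, and suppose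
that for the non-trivial element `e` of `Z(E)`, `x` is not `E`-conjugate to `x * e`.
Then `[E, x] ≤ C_E(x)` and `[E, x]` is elementary abelian. -/
theorem stmt8 {G : Type*} [Group G]
    (E : Subgroup G) (hEnormal : E.Normal) [Finite E]
    (hZcard : Nat.card (E ⊓ Subgroup.centralizer (E : Set G) : Subgroup G) = 2)
    (hComm : ⁅E, E⁆ = E ⊓ Subgroup.centralizer (E : Set G))
    (hSq : ∀ y ∈ E, y ^ 2 ∈ E ⊓ Subgroup.centralizer (E : Set G))
    (x : G) (hx2 : x ^ 2 = 1) (hx1 : x ≠ 1)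
    (hxE : x ∉ Subgroup.centralizer (E : Set G))
    (hnotconj : ∀ e ∈ E ⊓ Subgroup.centralizer (E : Set G), e ≠ 1 →
      ¬ ∃ f ∈ E, f * x * f⁻¹ = x * e) :
    ⁅E, Subgroup.closure {x}⁆ ≤ E ⊓ Subgroup.centralizer {x} ∧
    ∀ w ∈ ⁅E, Subgroup.closure {x}⁆, w ^ 2 = 1 := by
  set Z : Subgroup G := E ⊓ Subgroup.centralizer (E : Set G) with hZ
  have hZfin : Finite Z := Nat.finite_of_card_ne_zero (by rw [hZcard]; norm_num)
  -- every element of Z squares to 1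
  have hZsq : ∀ z ∈ Z, z ^ 2 = 1 := by
    intro z hz
    have : (⟨z, hz⟩ : Z) ^ 2 = 1 := by
      have := pow_card_eq_one' (G := Z) (x := ⟨z, hz⟩)
      rwa [hZcard] at this
    have := congrArg (Subtype.val) this
    simpa using this
  -- uniqueness of the nontrivial element of Z
  have hZuniq : ∀ z₁ ∈ Z, ∀ z₂ ∈ Z, z₁ ≠ 1 → z₂ ≠ 1 → z₁ = z₂ := by
    intro z₁ h₁ z₂ h₂ hn₁ hn₂
    obtain ⟨y, _, hy⟩ := (Nat.card_eq_two_iff' (1 : Z)).mp hZcard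
    have e₁ : (⟨z₁, h₁⟩ : Z) = y := hy _ (fun h => hn₁ (by simpa using congrArg Subtype.val h))
    have e₂ : (⟨z₂, h₂⟩ : Z) = y := hy _ (fun h => hn₂ (by simpa using congrArg Subtype.val h))
    have := e₁.trans e₂.symm
    simpa using congrArg Subtype.val this
  -- Z centralizes E
  have hZcommE : ∀ z ∈ Z, ∀ f ∈ E, f * z = z * f := by
    intro z hz f hf
    exact Subgroup.mem_centralizer_iff.mp hz.2 f hf
  have hxx : x * x = 1 := by rwa [pow_two] at hx2
  have hxinv : x⁻¹ = x := by
    rw [inv_eq_iff_mul_eq_one, hxx]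
  -- x centralizes Z
  have hZx : ∀ z ∈ Z, x * z = z * x := by
    intro z hz
    rcases eq_or_ne z 1 with rfl | hz1
    · simp
    · have hz' : x * z * x⁻¹ ∈ Z := by
        refine Subgroup.mem_inf.mpr ⟨hEnormal.conj_mem z hz.1 x,
          Subgroup.mem_centralizer_iff.mpr ?_⟩
        intro f hf
        have hf' : x⁻¹ * f * x ∈ E := by
          have := hEnormal.conj_mem f hf x⁻¹
          simpa using this
        have hc := hZcommE z hz (x⁻¹ * f * x) hf'
        calc f * (x * z * x⁻¹) = x * (x⁻¹ * f * x * z) * x⁻¹ := by group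
          _ = x * (z * (x⁻¹ * f * x)) * x⁻¹ := by rw [← hc]
          _ = x * z * x⁻¹ * f := by group
      have hne : x * z * x⁻¹ ≠ 1 := by
        intro h
        apply hz1
        have : z = x⁻¹ * 1 * x := by
          rw [← h]; group
        simpa using this
      have := hZuniq _ hz' _ hz hne hz1
      calc x * z = (x * z * x⁻¹) * x := by group
        _ = z * x := by rw [this]
  -- commutators with x lie in E
  have hmemE : ∀ f ∈ E, ⁅f, x⁆ ∈ E := by
    intro f hf
    have h2 : x * f⁻¹ * x⁻¹ ∈ E := hEnormal.conj_mem f⁻¹ (inv_mem hf) x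
    have : ⁅f, x⁆ = f * (x * f⁻¹ * x⁻¹) := by
      rw [commutatorElement_def]; group
    rw [this]
    exact mul_mem hf h2
  -- conjugation by x inverts commutators
  have hBinv : ∀ f : G, x * ⁅f, x⁆ * x⁻¹ = ⁅f, x⁆⁻¹ := by
    intro f
    have h1 : x⁻¹ * x⁻¹ = 1 := by rw [hxinv]; exact hxx
    calc x * ⁅f, x⁆ * x⁻¹ = x * f * x * f⁻¹ * (x⁻¹ * x⁻¹) := by
          rw [commutatorElement_def]; group
      _ = x * f * x * f⁻¹ := by rw [h1, mul_one]
      _ = x * f * x⁻¹ * f⁻¹ := by rw [hxinv]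
      _ = ⁅f, x⁆⁻¹ := by rw [commutatorElement_def]; group
  -- commutators square to 1
  have hCsq : ∀ f ∈ E, ⁅f, x⁆ ^ 2 = 1 := by
    intro f hf
    set c := ⁅f, x⁆ with hc
    by_contra hne
    have hcE : c ∈ E := hmemE f hf
    have hc2Z : c ^ 2 ∈ Z := hSq c hcE
    -- the key relation: x * c = c⁻¹ * x
    have hR : x * c = c⁻¹ * x := by
      have := hBinv f
      rw [← hc] at this
      calc x * c = (x * c * x⁻¹) * x := by group
        _ = c⁻¹ * x := by rw [this]
    have hkey : c * x * c⁻¹ = x * c ^ 2 := by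
      have h3 : x * c ^ 3 = c * x := by
        calc x * c ^ 3 = (x * c ^ 2) * c := by group
          _ = (c ^ 2 * x) * c := by rw [← hZx _ hc2Z]
          _ = c ^ 2 * (x * c) := by group
          _ = c ^ 2 * (c⁻¹ * x) := by rw [hR]
          _ = c * x := by group
      calc c * x * c⁻¹ = (x * c ^ 3) * c⁻¹ := by rw [h3]
        _ = x * c ^ 2 := by group
    exact hnotconj (c ^ 2) hc2Z hne ⟨c, hcE, hkey⟩
  -- commutators commute with x
  have hCx : ∀ f ∈ E, x * ⁅f, x⁆ = ⁅f, x⁆ * x := by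
    intro f hf
    have hinv : ⁅f, x⁆⁻¹ = ⁅f, x⁆ := by
      rw [inv_eq_iff_mul_eq_one, ← pow_two]
      exact hCsq f hf
    have := hBinv f
    rw [hinv] at this
    calc x * ⁅f, x⁆ = (x * ⁅f, x⁆ * x⁻¹) * x := by group
      _ = ⁅f, x⁆ * x := by rw [this]
  -- commutators pairwise commute
  have hD : ∀ f ∈ E, ∀ g ∈ E, Commute ⁅f, x⁆ ⁅g, x⁆ := by
    intro f hf g hg
    set c := ⁅f, x⁆ with hcdef
    set d := ⁅g, x⁆ with hddef
    have hcE : c ∈ E := hmemE f hf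
    have hdE : d ∈ E := hmemE g hg
    have hc2 : c ^ 2 = 1 := hCsq f hf
    have hd2 : d ^ 2 = 1 := hCsq g hg
    set z := ⁅g, c⁆ with hzdef
    have hzZ : z ∈ Z := hComm ▸ Subgroup.commutator_mem_commutator hg hcE
    have hk : ⁅g * f, x⁆ = z * (c * d) := by
      rw [hzdef, hcdef, hddef]
      simp only [commutatorElement_def]
      group
    have hk2 : (z * (c * d)) ^ 2 = 1 := by
      rw [← hk]; exact hCsq (g * f) (mul_mem hg hf)
    have hzcd : (c * d) * z = z * (c * d) := hZcommE z hzZ (c * d) (mul_mem hcE hdE)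
    have hcd2 : (c * d) ^ 2 = 1 := by
      have hz2 : z ^ 2 = 1 := hZsq z hzZ
      have : (z * (c * d)) ^ 2 = z ^ 2 * (c * d) ^ 2 := by
        calc (z * (c * d)) ^ 2 = z * ((c * d) * z) * (c * d) := by
              rw [pow_two]; group
          _ = z * (z * (c * d)) * (c * d) := by rw [hzcd]
          _ = z ^ 2 * (c * d) ^ 2 := by rw [pow_two, pow_two]; group
      rw [this, hz2, one_mul] at hk2
      exact hk2
    have hdinv : d⁻¹ = d := by rw [inv_eq_iff_mul_eq_one, ← pow_two]; exact hd2
    have hcinv : c⁻¹ = c := by rw [inv_eq_iff_mul_eq_one, ← pow_two]; exact hc2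
    have : c * d = d * c := by
      calc c * d = (c * d) * ((c * d) * (d⁻¹ * c⁻¹)) := by group
        _ = (c * d) ^ 2 * (d⁻¹ * c⁻¹) := by rw [pow_two]; group
        _ = d⁻¹ * c⁻¹ := by rw [hcd2, one_mul]
        _ = d * c := by rw [hdinv, hcinv]
    exact this
  -- elements of closure {x} are 1 or x
  have hclx : ∀ y ∈ Subgroup.closure ({x} : Set G), y = 1 ∨ y = x := by
    intro y hy
    obtain ⟨n, hn⟩ := Subgroup.mem_closure_singleton.mp hy
    have hx2' : x ^ (2 : ℤ) = 1 := by
      rw [show (2 : ℤ) = ((2 : ℕ) : ℤ) by norm_num, zpow_natCast, hx2]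
    rcases Int.even_or_odd n with ⟨m, hm⟩ | ⟨m, hm⟩
    · left
      rw [← hn, hm, ← two_mul, zpow_mul, hx2', one_zpow]
    · right
      rw [← hn, hm, zpow_add, zpow_mul, hx2', one_zpow, one_mul, zpow_one]
  -- first conclusion
  have hfirst : ⁅E, Subgroup.closure ({x} : Set G)⁆ ≤ E ⊓ Subgroup.centralizer {x} := by
    rw [Subgroup.commutator_le]
    intro f hf y hy
    rcases hclx y hy with rfl | rfl
    · rw [commutatorElement_one_right]
      exact one_mem _
    · refine Subgroup.mem_inf.mpr ⟨hmemE f hf, Subgroup.mem_centralizer_iff.mpr ?_⟩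
      intro h hh
      rw [Set.mem_singleton_iff] at hh
      subst hh
      exact hCx f hf
  -- generators commute with everything in the commutator subgroup
  have hgencomm : ∀ f ∈ E, ∀ v ∈ ⁅E, Subgroup.closure ({x} : Set G)⁆,
      Commute v ⁅f, x⁆ := by
    intro f hf v hv
    rw [Subgroup.commutator_def] at hv
    induction hv using Subgroup.closure_induction with
    | mem v hvmem =>
      obtain ⟨g, hg, y, hy, hgy⟩ := hvmem
      rcases hclx y hy with rfl | rfl
      · rw [← hgy, commutatorElement_one_right]
        exact Commute.one_left _
      · rw [← hgy]; exact hD g hg f hf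
    | one => exact Commute.one_left _
    | mul a b _ _ ha hb => exact ha.mul_left hb
    | inv a _ ha => exact ha.inv_left
  refine ⟨hfirst, ?_⟩
  -- second conclusion: every element squares to 1
  intro w hw
  rw [Subgroup.commutator_def] at hw
  have key : w ^ 2 = 1 ∧ ∀ v ∈ ⁅E, Subgroup.closure ({x} : Set G)⁆, Commute v w := by
    induction hw using Subgroup.closure_induction with
    | mem w hwmem =>
      obtain ⟨g, hg, y, hy, hgy⟩ := hwmem
      rcases hclx y hy with rfl | rfl
      · rw [← hgy, commutatorElement_one_right]
        exact ⟨one_pow 2, fun v _ => Commute.one_right v⟩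
      · rw [← hgy]
        exact ⟨hCsq g hg, fun v hv => hgencomm g hg v hv⟩
    | one => exact ⟨one_pow 2, fun v _ => Commute.one_right v⟩
    | mul a b ha hb iha ihb =>
      constructor
      · have hab : Commute a b := by
          have haK : a ∈ ⁅E, Subgroup.closure ({x} : Set G)⁆ := by
            rw [Subgroup.commutator_def]; exact ha
          exact ihb.2 a haK
        rw [hab.mul_pow, iha.1, ihb.1, one_mul]
      · intro v hv
        exact (iha.2 v hv).mul_right (ihb.2 v hv)
    | inv a ha iha =>
      constructor
      · rw [inv_pow, iha.1, inv_one]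
      · intro v hv
        exact (iha.2 v hv).inv_right
  exact key.1
end

section
/- For every Sylow 2-subgroup S of Sp_6(2), the natural module V = Fin 6 → ZMod 2 is uniserial as an S-module: the set of ZMod 2-submodules of V that are invariant under matrix–vector multiplication by every element of S is totally ordered by inclusion. -/
namespace Stmt13Aux

open Module

abbrev V : Type := (Fin 3 ⊕ Fin 3) → ZMod 2

/-- A regular unipotent element of `Sp₆(2)`. -/
def Amat : Matrix (Fin 3 ⊕ Fin 3) (Fin 3 ⊕ Fin 3) (ZMod 2) :=
  Matrix.of fun i j =>
    !![1,0,1,0,1,0; 1,1,0,0,0,1; 1,0,1,1,0,1; 1,1,1,0,1,0; 0,1,1,0,0,1; 0,0,1,1,0,1]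
      (finSumFinEquiv i) (finSumFinEquiv j)

lemma hA : Amat ∈ Matrix.symplecticGroup (Fin 3) (ZMod 2) := by
  rw [SymplecticGroup.mem_iff]; decide

lemma hA8 : Amat ^ 8 = 1 := by decide

def Bmat : Matrix (Fin 3 ⊕ Fin 3) (Fin 3 ⊕ Fin 3) (ZMod 2) := Amat + 1

/-- The nilpotent endomorphism `A - 1 = A + 1`. -/
noncomputable def ff : Module.End (ZMod 2) V := Bmat.mulVecLin

def v0 : V := fun j => if j = Sum.inl 2 then 1 else 0

lemma hpow : ∀ (k : ℕ) (v : V), (ff ^ k) v = (Bmat ^ k).mulVec v := by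
  intro k
  induction k with
  | zero => intro v; simp [Matrix.one_mulVec]
  | succ n ih =>
      intro v
      rw [pow_succ, pow_succ, Module.End.mul_apply]
      show (ff ^ n) (Bmat.mulVecLin v) = _
      rw [Matrix.mulVecLin_apply, ih, Matrix.mulVec_mulVec]

lemma hB6 : ∀ v : V, (ff ^ 6) v = 0 := by
  intro v
  rw [hpow]
  have h : Bmat ^ 6 = 0 := by decide
  rw [h, Matrix.zero_mulVec]

lemma hB5 : (ff ^ 5) v0 ≠ 0 := by
  rw [hpow]
  decide

noncomputable def K : ℕ → Submodule (ZMod 2) V := fun i => LinearMap.ker (ff ^ i)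

lemma hcomp (a b : ℕ) (x : V) : (ff ^ a) ((ff ^ b) x) = (ff ^ (a + b)) x := by
  rw [← Module.End.mul_apply, ← pow_add]

lemma hKmono {i j : ℕ} (hij : i ≤ j) : K i ≤ K j := by
  intro x hx
  have hx' : (ff ^ i) x = 0 := hx
  show (ff ^ j) x = 0
  rw [show j = (j - i) + i by omega, ← hcomp, hx', map_zero]

lemma hzero6 : ∀ j, 6 ≤ j → ∀ x : V, (ff ^ j) x = 0 := by
  intro j hj x
  rw [show j = (j - 6) + 6 by omega, ← hcomp, hB6, map_zero]

lemma hstab {i : ℕ} (h : K i = K (i + 1)) : ∀ d, K (i + d) = K i := by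
  intro d
  induction d with
  | zero => rfl
  | succ n ih =>
      refine le_antisymm ?_ (hKmono (by omega))
      intro x hx
      have hx' : (ff ^ (i + n + 1)) x = 0 := hx
      have h1 : (ff ^ (i + 1)) ((ff ^ n) x) = 0 := by
        rw [hcomp]; rw [show i + 1 + n = i + n + 1 by omega]; exact hx'
      have h2 : (ff ^ n) x ∈ K (i + 1) := h1
      rw [← h] at h2
      have h3 : (ff ^ (i + n)) x = 0 := by
        rw [show i + n = i + n by rfl, ← hcomp i n x]; exact h2
      have : x ∈ K (i + n) := h3
      rw [ih] at this
      exact this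

lemma hK6 : K 6 = ⊤ := by
  refine eq_top_iff.mpr fun x _ => ?_
  exact hB6 x

lemma hKne {i : ℕ} (hi : i ≤ 5) : K i ≠ K (i + 1) := by
  intro h
  have h6 : K 6 = K i := by
    have := hstab h (6 - i)
    rwa [show i + (6 - i) = 6 by omega] at this
  have hKi : K i = ⊤ := by rw [← h6, hK6]
  have : (ff ^ 5) v0 = 0 := by
    have hv : v0 ∈ K i := by rw [hKi]; trivial
    have hv' : (ff ^ i) v0 = 0 := hv
    rw [show (5 : ℕ) = (5 - i) + i by omega, ← hcomp, hv', map_zero]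
  exact hB5 this

lemma hrankV : finrank (ZMod 2) V = 6 := by
  rw [Module.finrank_pi]
  simp

lemma hrank : ∀ d i, i + d = 6 → finrank (ZMod 2) (K i) ≤ i := by
  intro d
  induction d with
  | zero =>
      intro i hi
      have h1 := Submodule.finrank_le (K i)
      have h2 := hrankV
      omega
  | succ n ih =>
      intro i hi
      have h1 : K i < K (i + 1) :=
        lt_of_le_of_ne (hKmono (by omega)) (hKne (by omega))
      have h2 := Submodule.finrank_lt_finrank_of_lt h1
      have h3 := ih (i + 1) (by omega)
      omega

lemma span_eq (v : V) (k : ℕ) (hk1 : (ff ^ k) v ≠ 0) (hk2 : (ff ^ (k + 1)) v = 0) :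
    K (k + 1) ≤ Submodule.span (ZMod 2) (Set.range fun i : Fin (k + 1) => (ff ^ (i : ℕ)) v) := by
  have hk5 : k ≤ 5 := by
    by_contra h
    exact hk1 (hzero6 k (by omega) v)
  set b : Fin (k + 1) → V := fun i => (ff ^ (i : ℕ)) v with hb
  have hvz : ∀ j, k + 1 ≤ j → (ff ^ j) v = 0 := by
    intro j hj
    rw [show j = (j - (k + 1)) + (k + 1) by omega, ← hcomp, hk2, map_zero]
  have hli : LinearIndependent (ZMod 2) b := by
    rw [Fintype.linearIndependent_iff]
    intro g hg
    suffices hs : ∀ m : ℕ, ∀ hm : m < k + 1, g ⟨m, hm⟩ = 0 by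
      intro i
      have := hs i.1 i.2
      simpa using this
    intro m
    induction m using Nat.strong_induction_on with
    | _ m IH =>
      intro hm
      have hmk : m ≤ k := by omega
      have happ : (ff ^ (k - m)) (∑ i, g i • b i) = 0 := by rw [hg, map_zero]
      rw [map_sum] at happ
      have hterm : ∀ i : Fin (k + 1),
          (ff ^ (k - m)) (g i • b i) = g i • (ff ^ (k - m + (i : ℕ))) v := by
        intro i
        rw [map_smul, hb]
        simp only []
        rw [hcomp]
      rw [Finset.sum_congr rfl fun i _ => hterm i] at happ
      have hsingle : (∑ i : Fin (k + 1), g i • (ff ^ (k - m + (i : ℕ))) v)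
          = g ⟨m, hm⟩ • (ff ^ k) v := by
        rw [Finset.sum_eq_single (⟨m, hm⟩ : Fin (k + 1))]
        · have : k - m + m = k := by omega
          rw [this]
        · intro i _ hne
          have hne' : (i : ℕ) ≠ m := fun h => hne (Fin.ext h)
          rcases lt_or_gt_of_ne hne' with hlt | hgt
          · have hz : g i = 0 := by
              have := IH i.1 hlt i.2
              simpa using this
            rw [hz, zero_smul]
          · have : (ff ^ (k - m + (i : ℕ))) v = 0 := hvz _ (by omega)
            rw [this, smul_zero]
        · intro h; exact absurd (Finset.mem_univ _) h
      rw [hsingle] at happ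
      rcases smul_eq_zero.mp happ with h | h
      · exact h
      · exact absurd h hk1
  have hsple : Submodule.span (ZMod 2) (Set.range b) ≤ K (k + 1) := by
    rw [Submodule.span_le]
    rintro x ⟨i, rfl⟩
    show (ff ^ (k + 1)) ((ff ^ (i : ℕ)) v) = 0
    rw [hcomp]
    exact hvz _ (by omega)
  have hfr : finrank (ZMod 2) (Submodule.span (ZMod 2) (Set.range b)) = k + 1 := by
    rw [finrank_span_eq_card hli, Fintype.card_fin]
  have heq := Submodule.eq_of_le_of_finrank_le hsple
    (by rw [hfr]; exact hrank (6 - (k + 1)) (k + 1) (by omega))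
  exact heq.ge

lemma val_exists (x : V) (hx : x ≠ 0) :
    ∃ a, (ff ^ a) x ≠ 0 ∧ (ff ^ (a + 1)) x = 0 := by
  by_contra hcon
  push_neg at hcon
  have hall : ∀ a, (ff ^ a) x ≠ 0 := by
    intro a
    induction a with
    | zero => simpa using hx
    | succ n ih => exact hcon n ih
  exact hall 6 (hB6 x)

lemma key (U : Submodule (ZMod 2) V) (hU : ∀ x ∈ U, ff x ∈ U)
    (u : V) (hu : u ∈ U) (k : ℕ) (hk : (ff ^ k) u ≠ 0) : K (k + 1) ≤ U := by
  classical
  have hUi : ∀ i, ∀ x ∈ U, (ff ^ i) x ∈ U := by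
    intro i
    induction i with
    | zero => intro x hx; simpa using hx
    | succ n ih =>
        intro x hx
        rw [pow_succ, Module.End.mul_apply]
        exact ih _ (hU x hx)
  have hu0 : u ≠ 0 := by
    intro h
    exact hk (by rw [h, map_zero])
  obtain ⟨a, ha1, ha2⟩ := val_exists u hu0
  have hka : k ≤ a := by
    by_contra h
    push_neg at h
    exact hk (by rw [show k = (k - (a + 1)) + (a + 1) by omega, ← hcomp, ha2, map_zero])
  calc K (k + 1) ≤ K (a + 1) := hKmono (by omega)
    _ ≤ Submodule.span (ZMod 2) (Set.range fun i : Fin (a + 1) => (ff ^ (i : ℕ)) u) :=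
        span_eq u a ha1 ha2
    _ ≤ U := Submodule.span_le.mpr (by rintro x ⟨i, rfl⟩; exact hUi _ u hu)

/-- The core lemma: submodules invariant under `Amat` are totally ordered. -/
lemma core (U W : Submodule (ZMod 2) V)
    (hU : ∀ v ∈ U, Amat.mulVec v ∈ U) (hW : ∀ v ∈ W, Amat.mulVec v ∈ W) :
    U ≤ W ∨ W ≤ U := by
  have hff : ∀ v : V, ff v = Amat.mulVec v + v := by
    intro v
    show Bmat.mulVecLin v = _
    rw [Matrix.mulVecLin_apply, Bmat, Matrix.add_mulVec, Matrix.one_mulVec]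
  have hU' : ∀ v ∈ U, ff v ∈ U := fun v hv => by
    rw [hff]; exact U.add_mem (hU v hv) hv
  have hW' : ∀ v ∈ W, ff v ∈ W := fun v hv => by
    rw [hff]; exact W.add_mem (hW v hv) hv
  by_contra hcon
  rw [not_or] at hcon
  obtain ⟨h1, h2⟩ := hcon
  obtain ⟨u, hu, huW⟩ := SetLike.not_le_iff_exists.mp h1
  obtain ⟨w, hw, hwU⟩ := SetLike.not_le_iff_exists.mp h2
  have hu0 : u ≠ 0 := fun h => huW (h ▸ W.zero_mem)
  have hw0 : w ≠ 0 := fun h => hwU (h ▸ U.zero_mem)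
  obtain ⟨a, ha1, ha2⟩ := val_exists u hu0
  obtain ⟨c, hc1, hc2⟩ := val_exists w hw0
  rcases le_total a c with h | h
  · exact huW (key W hW' w hw c hc1 (hKmono (by omega) (show u ∈ K (a + 1) from ha2)))
  · exact hwU (key U hU' u hu a ha1 (hKmono (by omega) (show w ∈ K (c + 1) from hc2)))

end Stmt13Aux

set_option maxHeartbeats 1000000 in
open Stmt13Aux in
/-- For every Sylow 2-subgroup `S` of `Sp₆(2)`, the natural module
`V = (Fin 3 ⊕ Fin 3) → ZMod 2` is uniserial as an `S`-module: the `S`-invariant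
`GF(2)`-submodules of `V` are totally ordered by inclusion. -/
theorem stmt13 (S : Sylow 2 (Matrix.symplecticGroup (Fin 3) (ZMod 2))) :
    ∀ U W : Submodule (ZMod 2) ((Fin 3 ⊕ Fin 3) → ZMod 2),
      (∀ g ∈ (S : Subgroup (Matrix.symplecticGroup (Fin 3) (ZMod 2))), ∀ v ∈ U,
        Matrix.mulVec (g : Matrix (Fin 3 ⊕ Fin 3) (Fin 3 ⊕ Fin 3) (ZMod 2)) v ∈ U) →
      (∀ g ∈ (S : Subgroup (Matrix.symplecticGroup (Fin 3) (ZMod 2))), ∀ v ∈ W,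
        Matrix.mulVec (g : Matrix (Fin 3 ⊕ Fin 3) (Fin 3 ⊕ Fin 3) (ZMod 2)) v ∈ W) →
      U ≤ W ∨ W ≤ U := by
  intro U W hU hW
  classical
  set G := Matrix.symplecticGroup (Fin 3) (ZMod 2) with hG
  let uu : G := ⟨Amat, hA⟩
  have huu8 : uu ^ 8 = 1 := by
    apply Subtype.ext
    rw [SubmonoidClass.coe_pow]
    exact hA8
  have hP : IsPGroup 2 (Subgroup.zpowers uu) := by
    rintro ⟨x, hx⟩
    refine ⟨3, ?_⟩
    apply Subtype.ext
    rw [SubmonoidClass.coe_pow]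
    obtain ⟨n, rfl⟩ := hx
    show (uu ^ n) ^ (2 ^ 3 : ℕ) = 1
    rw [← zpow_natCast (uu ^ n) (2 ^ 3), ← zpow_mul, mul_comm, zpow_mul, zpow_natCast]
    have h8 : (2 : ℕ) ^ 3 = 8 := by norm_num
    rw [h8, huu8, one_zpow]
  obtain ⟨Q, hQ⟩ := hP.exists_le_sylow
  obtain ⟨g, hg⟩ := MulAction.exists_smul_eq G Q S
  have hc : g * uu * g⁻¹ ∈ (S : Subgroup G) := by
    have h1 : ((g • Q : Sylow 2 G) : Subgroup G) = (S : Subgroup G) := by rw [hg]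
    rw [← h1, Sylow.coe_subgroup_smul]
    have := Subgroup.smul_mem_pointwise_smul uu (MulAut.conj g) (Q : Subgroup G)
      (hQ (Subgroup.mem_zpowers uu))
    simpa [MulAut.smul_def] using this
  set gm : Matrix (Fin 3 ⊕ Fin 3) (Fin 3 ⊕ Fin 3) (ZMod 2) := g.val with hgm
  let L : ((Fin 3 ⊕ Fin 3) → ZMod 2) →ₗ[ZMod 2] ((Fin 3 ⊕ Fin 3) → ZMod 2) :=
    Matrix.mulVecLin gm
  have hLapp : ∀ x, L x = gm.mulVec x := fun x => Matrix.mulVecLin_apply _ _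
  have hinvL : ∀ (X : Submodule (ZMod 2) ((Fin 3 ⊕ Fin 3) → ZMod 2)),
      (∀ g' ∈ (S : Subgroup G), ∀ v ∈ X,
        Matrix.mulVec (g' : Matrix (Fin 3 ⊕ Fin 3) (Fin 3 ⊕ Fin 3) (ZMod 2)) v ∈ X) →
      ∀ v ∈ X.comap L, Amat.mulVec v ∈ X.comap L := by
    intro X hX v hv
    rw [Submodule.mem_comap, hLapp] at hv ⊢
    have h2 : (g * uu * g⁻¹) * g = g * uu := by exact inv_mul_cancel_right _ _
    have h3 := congrArg Subtype.val h2
    rw [MulMemClass.coe_mul, MulMemClass.coe_mul] at h3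
    have mm : (g * uu * g⁻¹ : G).val * gm = gm * Amat := h3
    have key1 : gm.mulVec (Amat.mulVec v)
        = (g * uu * g⁻¹ : G).val.mulVec (gm.mulVec v) := by
      rw [Matrix.mulVec_mulVec, Matrix.mulVec_mulVec, mm]
    rw [key1]
    exact hX _ hc _ hv
  have hcore := core (U.comap L) (W.comap L) (hinvL U hU) (hinvL W hW)
  have transfer : ∀ (X Y : Submodule (ZMod 2) ((Fin 3 ⊕ Fin 3) → ZMod 2)),
      X.comap L ≤ Y.comap L → X ≤ Y := by
    intro X Y h x hx
    have hxv : L ((g⁻¹ : G).val.mulVec x) = x := by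
      rw [hLapp, Matrix.mulVec_mulVec]
      have h4 := congrArg Subtype.val (mul_inv_cancel g)
      rw [MulMemClass.coe_mul] at h4
      have hone : gm * (g⁻¹ : G).val = 1 := h4
      rw [hone, Matrix.one_mulVec]
    have h1 : (g⁻¹ : G).val.mulVec x ∈ X.comap L := by
      rw [Submodule.mem_comap, hxv]; exact hx
    have h2 := h h1
    rw [Submodule.mem_comap, hxv] at h2
    exact h2
  rcases hcore with h | h
  · exact Or.inl (transfer U W h)
  · exact Or.inr (transfer W U h)
end

section
/- Let W be a 7-dimensional vector space over ZMod 2 equipped with a linear representation ρ of Sp_6(2) such that the fixed subspace C_W(Sp_6(2)) = {w ∈ W : ρ(g)w = w for all g ∈ Sp_6(2)} is 1-dimensional and the induced representation on the quotient W / C_W(Sp_6(2)) is equivalent, via an Sp_6(2)-equivariant ZMod 2-linear isomorphism, to the natural module Fin 6 → ZMod 2 with the matrix–vector multiplication action. Then for every Sylow 2-subgroup S of Sp_6(2), the fixed subspace C_W(S) = {w ∈ W : ρ(g)w = w for all g ∈ S} strictly contains C_W(Sp_6(2)); in particular C_W(S) has dimension at least 2. -/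
open Matrix Sum

namespace Stmt15Aux

abbrev V6 := (Fin 3 ⊕ Fin 3) → ZMod 2
abbrev M6 := Matrix (Fin 3 ⊕ Fin 3) (Fin 3 ⊕ Fin 3) (ZMod 2)
abbrev J6 : M6 := Matrix.J (Fin 3) (ZMod 2)

def ee1 : V6 := fun j => if j = inl 0 then 1 else 0
def ee2 : V6 := fun j => if j = inl 1 then 1 else 0
def ee3 : V6 := fun j => if j = inl 2 then 1 else 0
def ff1 : V6 := fun j => if j = inr 0 then 1 else 0
def ff2 : V6 := fun j => if j = inr 1 then 1 else 0
def ff3 : V6 := fun j => if j = inr 2 then 1 else 0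

/-- symplectic transvection along `u` -/
def Tv (u : V6) : M6 := Matrix.of fun i j => (if i = j then 1 else 0) + u i * (J6 *ᵥ u) j

/-- the transvection along `ee1`, written explicitly -/
def Tm : M6 := Matrix.of fun i j => (if i = j then 1 else 0) + ee1 i * ff1 j

lemma hTmem : Tm * J6 * Tmᵀ = J6 := by decide
lemma hTsq : Tm * Tm = 1 := by decide
lemma hTvec : ∀ x : V6, Tm *ᵥ x = x + x (inr 0) • ee1 := by decide
lemma hTff1 : Tm *ᵥ ff1 - ff1 = ee1 := by decide
lemma hJee1 : ee1 ᵥ* J6 = ff1 := by decide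

def colsk3 : Fin 3 ⊕ Fin 3 → V6
  | inl 0 => ee1 | inl 1 => ee3 | inl 2 => ee2
  | inr 0 => ff1 | inr 1 => ff3 | inr 2 => ff2
def k3 : M6 := Matrix.of fun i j => colsk3 j i
def colskf2 : Fin 3 ⊕ Fin 3 → V6
  | inl 0 => ee1 | inl 1 => ff2 | inl 2 => ee3
  | inr 0 => ff1 | inr 1 => ee2 | inr 2 => ff3
def kf2 : M6 := Matrix.of fun i j => colskf2 j i
def colskf3 : Fin 3 ⊕ Fin 3 → V6
  | inl 0 => ee1 | inl 1 => ff3 | inl 2 => ee2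
  | inr 0 => ff1 | inr 1 => ee3 | inr 2 => ff2
def kf3 : M6 := Matrix.of fun i j => colskf3 j i
def colsk23 : Fin 3 ⊕ Fin 3 → V6
  | inl 0 => ee1 | inl 1 => ee2 + ee3 | inl 2 => ee3
  | inr 0 => ff1 | inr 1 => ff2 | inr 2 => ff3 + ff2
def k23 : M6 := Matrix.of fun i j => colsk23 j i

lemma hk3 : k3 * J6 * k3ᵀ = J6 ∧ k3 *ᵥ ee1 = ee1 ∧ k3 *ᵥ ee2 = ee3 := by decide
lemma hkf2 : kf2 * J6 * kf2ᵀ = J6 ∧ kf2 *ᵥ ee1 = ee1 ∧ kf2 *ᵥ ee2 = ff2 := by decide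
lemma hkf3 : kf3 * J6 * kf3ᵀ = J6 ∧ kf3 *ᵥ ee1 = ee1 ∧ kf3 *ᵥ ee2 = ff3 := by decide
lemma hk23 : k23 * J6 * k23ᵀ = J6 ∧ k23 *ᵥ ee1 = ee1 ∧ k23 *ᵥ ee2 = ee2 + ee3 := by decide

lemma hdecomp : ∀ y : V6, y (inr 0) = 0 →
    y = y (inl 0) • ee1 + y (inl 1) • ee2 + y (inl 2) • ee3 + y (inr 1) • ff2 + y (inr 2) • ff3 := by
  decide

/-- row `f1` of a symplectic matrix fixing `ee1` is the `ff1` indicator -/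
lemma hff1k (k : M6) (hk : k ∈ Matrix.symplecticGroup (Fin 3) (ZMod 2))
    (h1 : k *ᵥ ee1 = ee1) : ff1 ᵥ* k = ff1 := by
  have h' := SymplecticGroup.mem_iff'.mp hk
  have h2 : ee1 ᵥ* (kᵀ * J6 * k) = ee1 ᵥ* J6 := by rw [h']
  rw [← Matrix.vecMul_vecMul, ← Matrix.vecMul_vecMul, Matrix.vecMul_transpose, h1, hJee1] at h2
  exact h2

lemma hrowpres (k : M6) (hk : k ∈ Matrix.symplecticGroup (Fin 3) (ZMod 2))
    (h1 : k *ᵥ ee1 = ee1) (x : V6) : (k *ᵥ x) (inr 0) = x (inr 0) := by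
  have h2 := hff1k k hk h1
  have h3 : ∀ j, k (inr 0) j = ff1 j := by
    intro j
    have := congrFun h2 j
    simpa [Matrix.vecMul, dotProduct, ff1, ite_mul, Finset.sum_ite_eq, Finset.sum_ite_eq'] using this
  show (fun j => k (inr 0) j) ⬝ᵥ x = x (inr 0)
  simp only [h3]
  simp [dotProduct, ff1, ite_mul, Finset.sum_ite_eq, Finset.sum_ite_eq']

lemma hTcomm (k : M6) (hk : k ∈ Matrix.symplecticGroup (Fin 3) (ZMod 2))
    (h1 : k *ᵥ ee1 = ee1) : Tm * k = k * Tm := by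
  have h2 := hff1k k hk h1
  ext i j
  have hrow : ∀ j, (∑ l, ff1 l * k l j) = ff1 j := by
    intro j
    have := congrFun h2 j
    simpa [Matrix.vecMul, dotProduct] using this
  have hcol : (∑ l, k i l * ee1 l) = ee1 i := by
    have := congrFun h1 i
    simpa [Matrix.mulVec, dotProduct, mul_comm] using this
  simp only [Matrix.mul_apply, Tm, Matrix.of_apply, add_mul, mul_add, ite_mul, mul_ite,
    one_mul, zero_mul, mul_one, mul_zero, Finset.sum_add_distrib, Finset.sum_ite_eq,
    Finset.sum_ite_eq', Finset.mem_univ, if_true, mul_assoc]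
  congr 1
  rw [Finset.sum_congr rfl (fun x _ => (mul_assoc (k i x) (ee1 x) (ff1 j)).symm),
    ← Finset.sum_mul, hcol, ← Finset.mul_sum, hrow]

def wsel (v : V6) : V6 :=
  if v (inl 0) = 1 then ff1 else
  ff1 + (if v (inr 1) = 1 then ee2 else if v (inl 1) = 1 then ff2 else
         if v (inr 2) = 1 then ee3 else ff3)

def gmap (v : V6) : M6 :=
  if v = ee1 then 1 else
  if v (inr 0) = 1 then Tv (ee1 + v) else
  Tv (wsel v + v) * Tv (ee1 + wsel v)

set_option maxHeartbeats 2000000 in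
lemma hgmap : ∀ v : V6, v ≠ 0 →
    gmap v * J6 * (gmap v)ᵀ = J6 ∧ gmap v *ᵥ ee1 = v := by decide

/-- the natural action of the symplectic group on nonzero vectors -/
instance natMulAction :
    MulAction (Matrix.symplecticGroup (Fin 3) (ZMod 2)) {v : V6 // v ≠ 0} where
  smul g v := ⟨(g : M6) *ᵥ v.1, fun hv0 => v.2 (by
    have h1 : ((g⁻¹ : Matrix.symplecticGroup (Fin 3) (ZMod 2)) : M6) *ᵥ ((g : M6) *ᵥ v.1)
        = ((g⁻¹ : Matrix.symplecticGroup (Fin 3) (ZMod 2)) : M6) *ᵥ 0 := by rw [hv0]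
    rw [Matrix.mulVec_mulVec, Matrix.mulVec_zero,
      show ((g⁻¹ : Matrix.symplecticGroup (Fin 3) (ZMod 2)) : M6) * (g : M6)
        = ((g⁻¹ * g : Matrix.symplecticGroup (Fin 3) (ZMod 2)) : M6) from rfl,
      inv_mul_cancel] at h1
    simpa using h1)⟩
  one_smul v := Subtype.ext (by
    show ((1 : Matrix.symplecticGroup (Fin 3) (ZMod 2)) : M6) *ᵥ v.1 = v.1
    simp)
  mul_smul g h v := Subtype.ext (by
    show ((g * h : Matrix.symplecticGroup (Fin 3) (ZMod 2)) : M6) *ᵥ v.1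
      = (g : M6) *ᵥ ((h : M6) *ᵥ v.1)
    rw [Matrix.mulVec_mulVec]
    rfl)

lemma cardX : Nat.card {v : V6 // v ≠ 0} = 63 := by
  rw [Nat.card_eq_fintype_card]
  decide

end Stmt15Aux

open Stmt15Aux in
set_option maxHeartbeats 1000000 in
/-- Let `W` be a 7-dimensional `GF(2)`-representation of `Sp₆(2)`
whose fixed subspace `C_W(Sp₆(2))` is 1-dimensional and such that the induced
representation on `W / C_W(Sp₆(2))` is equivariantly isomorphic to the natural
6-dimensional module.  Then for every Sylow 2-subgroup `S` of `Sp₆(2)`, the fixed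
subspace `C_W(S)` strictly contains `C_W(Sp₆(2))`; in particular it has dimension
at least 2. -/
theorem stmt15 {W : Type*} [AddCommGroup W] [Module (ZMod 2) W]
    (hW : Module.finrank (ZMod 2) W = 7)
    (ρ : Representation (ZMod 2) (Matrix.symplecticGroup (Fin 3) (ZMod 2)) W)
    (hfix : Module.finrank (ZMod 2)
      ↥(⨅ g : Matrix.symplecticGroup (Fin 3) (ZMod 2),
        LinearMap.eqLocus (ρ g) LinearMap.id : Submodule (ZMod 2) W) = 1)
    (e : (W ⧸ (⨅ g : Matrix.symplecticGroup (Fin 3) (ZMod 2),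
        LinearMap.eqLocus (ρ g) LinearMap.id : Submodule (ZMod 2) W)) ≃ₗ[ZMod 2]
        ((Fin 3 ⊕ Fin 3) → ZMod 2))
    (he : ∀ (g : Matrix.symplecticGroup (Fin 3) (ZMod 2)) (w : W),
      e (Submodule.Quotient.mk (ρ g w)) =
        Matrix.mulVec (g : Matrix (Fin 3 ⊕ Fin 3) (Fin 3 ⊕ Fin 3) (ZMod 2))
          (e (Submodule.Quotient.mk w))) :
    ∀ S : Sylow 2 (Matrix.symplecticGroup (Fin 3) (ZMod 2)),
      (⨅ g : Matrix.symplecticGroup (Fin 3) (ZMod 2),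
          LinearMap.eqLocus (ρ g) LinearMap.id : Submodule (ZMod 2) W) <
        (⨅ g ∈ (S : Subgroup (Matrix.symplecticGroup (Fin 3) (ZMod 2))),
          LinearMap.eqLocus (ρ g) LinearMap.id) ∧
      2 ≤ Module.finrank (ZMod 2)
        ↥(⨅ g ∈ (S : Subgroup (Matrix.symplecticGroup (Fin 3) (ZMod 2))),
          LinearMap.eqLocus (ρ g) LinearMap.id : Submodule (ZMod 2) W) := by
  classical
  intro S
  haveI : Fact (Nat.Prime 2) := ⟨Nat.prime_two⟩
  haveI : FiniteDimensional (ZMod 2) W :=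
    Module.finite_of_finrank_pos (by rw [hW]; norm_num)
  have hCfix : ∀ (g) (w : W), w ∈ (⨅ g : Matrix.symplecticGroup (Fin 3) (ZMod 2),
      LinearMap.eqLocus (ρ g) LinearMap.id : Submodule (ZMod 2) W) → ρ g w = w := by
    intro g w hw
    have := (Submodule.mem_iInf _).mp hw g
    simpa [LinearMap.mem_eqLocus] using this
  set π : W →ₗ[ZMod 2] V6 := (e.toLinearMap.comp (Submodule.mkQ _) : W →ₗ[ZMod 2] V6) with hπdef
  have hπρ : ∀ (g) (w : W), π (ρ g w) = (g : M6) *ᵥ π w := fun g w => he g w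
  have hker : ∀ w : W, π w = 0 ↔ w ∈ (⨅ g : Matrix.symplecticGroup (Fin 3) (ZMod 2),
      LinearMap.eqLocus (ρ g) LinearMap.id : Submodule (ZMod 2) W) := by
    intro w
    rw [hπdef]
    simp only [LinearMap.comp_apply, LinearEquiv.coe_coe, Submodule.mkQ_apply]
    rw [LinearEquiv.map_eq_zero_iff, Submodule.Quotient.mk_eq_zero]
  have hsurj : ∀ v : V6, ∃ w : W, π w = v := by
    intro v
    obtain ⟨q, hq⟩ := Submodule.Quotient.mk_surjective _ (e.symm v)
    refine ⟨q, ?_⟩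
    rw [hπdef]
    simp only [LinearMap.comp_apply, LinearEquiv.coe_coe, Submodule.mkQ_apply, hq]
    exact e.apply_symm_apply v
  have addself : ∀ w : W, w + w = 0 := by
    intro w
    rw [← two_smul (ZMod 2) w, show (2 : ZMod 2) = 0 from rfl, zero_smul]
  -- the transvection
  set tG : Matrix.symplecticGroup (Fin 3) (ZMod 2) :=
    ⟨Tm, SymplecticGroup.mem_iff.mpr hTmem⟩ with htG
  set F : W →ₗ[ZMod 2] W := ρ tG - LinearMap.id with hFdef
  have hFapp : ∀ w, F w = ρ tG w - w := fun w => rfl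
  have hρt2 : ∀ w, ρ tG (ρ tG w) = w := by
    intro w
    rw [← Module.End.mul_apply, ← _root_.map_mul, show tG * tG = 1 from Subtype.ext hTsq, _root_.map_one,
      Module.End.one_apply]
  have hπt : ∀ w, π (ρ tG w) = π w + (π w) (inr 0) • ee1 := by
    intro w
    rw [hπρ, show ((tG : M6)) = Tm from rfl, hTvec]
  have hFC : ∀ w : W, (π w) (inr 0) = 0 → F w ∈ (⨅ g : Matrix.symplecticGroup (Fin 3) (ZMod 2),
      LinearMap.eqLocus (ρ g) LinearMap.id : Submodule (ZMod 2) W) := by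
    intro w h0
    rw [← hker, hFapp, map_sub, hπt, h0, zero_smul, add_zero, sub_self]
  have hwd : ∀ u u' : W, π u = π u' → F u = F u' := by
    intro u u' h
    have h2 : u - u' ∈ (⨅ g : Matrix.symplecticGroup (Fin 3) (ZMod 2),
      LinearMap.eqLocus (ρ g) LinearMap.id : Submodule (ZMod 2) W) := (hker _).mp (by rw [map_sub, h, sub_self])
    have h3 : F (u - u') = 0 := by rw [hFapp, hCfix tG _ h2, sub_self]
    rw [map_sub] at h3
    exact sub_eq_zero.mp h3
  have hcommG : ∀ h : Matrix.symplecticGroup (Fin 3) (ZMod 2), (h : M6) *ᵥ ee1 = ee1 →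
      tG * h = h * tG := fun h hh => Subtype.ext (hTcomm (h : M6) h.2 hh)
  have hinv : ∀ (k : Matrix.symplecticGroup (Fin 3) (ZMod 2)), (k : M6) *ᵥ ee1 = ee1 →
      ∀ u : W, (π u) (inr 0) = 0 → F (ρ k u) = F u := by
    intro k hk u h0
    rw [hFapp, hFapp]
    have h1 : ρ tG (ρ k u) = ρ k (ρ tG u) := by
      rw [← Module.End.mul_apply, ← _root_.map_mul, hcommG k hk, _root_.map_mul, Module.End.mul_apply]
    rw [h1, ← map_sub]
    exact hCfix k _ (by rw [← hFapp]; exact hFC u h0)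
  obtain ⟨u1, hu1⟩ := hsurj ff1
  obtain ⟨u2, hu2⟩ := hsurj ee2
  set ws : W := ρ tG u1 - u1 with hwsdef
  have hπws : π ws = ee1 := by
    rw [hwsdef, map_sub, hπρ, hu1, show ((tG : M6)) = Tm from rfl, hTff1]
  have hFws : F ws = 0 := by
    rw [hFapp]
    have h5 : ρ tG ws = u1 - ρ tG u1 := by rw [hwsdef, map_sub, hρt2]
    rw [h5, hwsdef]
    have h4 : u1 - ρ tG u1 - (ρ tG u1 - u1) = (u1 - ρ tG u1) + (u1 - ρ tG u1) := by abel
    rw [h4, addself]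
  set K3 : Matrix.symplecticGroup (Fin 3) (ZMod 2) :=
    ⟨k3, SymplecticGroup.mem_iff.mpr hk3.1⟩ with hK3
  set Kf2 : Matrix.symplecticGroup (Fin 3) (ZMod 2) :=
    ⟨kf2, SymplecticGroup.mem_iff.mpr hkf2.1⟩ with hKf2
  set Kf3 : Matrix.symplecticGroup (Fin 3) (ZMod 2) :=
    ⟨kf3, SymplecticGroup.mem_iff.mpr hkf3.1⟩ with hKf3
  set K23 : Matrix.symplecticGroup (Fin 3) (ZMod 2) :=
    ⟨k23, SymplecticGroup.mem_iff.mpr hk23.1⟩ with hK23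
  have hπ2 : (π u2) (inr 0) = 0 := by rw [hu2]; rfl
  have hb3 : F (ρ K3 u2) = F u2 := hinv K3 hk3.2.1 u2 hπ2
  have hbf2 : F (ρ Kf2 u2) = F u2 := hinv Kf2 hkf2.2.1 u2 hπ2
  have hbf3 : F (ρ Kf3 u2) = F u2 := hinv Kf3 hkf3.2.1 u2 hπ2
  have hb23 : F (ρ K23 u2) = F u2 := hinv K23 hk23.2.1 u2 hπ2
  have hκ : F u2 = 0 := by
    have hA : π (ρ K23 u2) = ee2 + ee3 := by
      rw [hπρ, hu2]; exact hk23.2.2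
    have hB : π (u2 + ρ K3 u2) = ee2 + ee3 := by
      rw [map_add, hπρ, hu2, show ((K3 : M6)) *ᵥ ee2 = ee3 from hk3.2.2]
    have h5 := hwd _ _ (hA.trans hB.symm)
    rw [hb23, map_add, hb3] at h5
    -- h5 : F u2 = F u2 + F u2
    have h6 := addself (F u2)
    rw [h6] at h5
    exact h5
  have keyA : ∀ u : W, (π u) (inr 0) = 0 → ρ tG u = u := by
    intro u h0
    have hd := hdecomp (π u) h0
    set u' : W := (π u) (inl 0) • ws + (π u) (inl 1) • u2 + (π u) (inl 2) • (ρ K3 u2)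
        + (π u) (inr 1) • (ρ Kf2 u2) + (π u) (inr 2) • (ρ Kf3 u2) with hu'
    have hπu' : π u' = π u := by
      rw [hu']
      rw [map_add, map_add, map_add, map_add, _root_.map_smul, _root_.map_smul, _root_.map_smul, _root_.map_smul, _root_.map_smul,
        hπws, hπρ, hπρ, hπρ, hu2,
        show ((K3 : M6)) *ᵥ ee2 = ee3 from hk3.2.2,
        show ((Kf2 : M6)) *ᵥ ee2 = ff2 from hkf2.2.2,
        show ((Kf3 : M6)) *ᵥ ee2 = ff3 from hkf3.2.2]
      exact hd.symm
    have hFu : F u = F u' := hwd u u' hπu'.symm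
    have hFu' : F u' = 0 := by
      rw [hu', map_add, map_add, map_add, map_add, _root_.map_smul, _root_.map_smul, _root_.map_smul, _root_.map_smul,
        _root_.map_smul, hFws, hb3, hbf2, hbf3, hκ]
      simp
    have h6 : F u = 0 := hFu.trans hFu'
    rw [hFapp] at h6
    exact sub_eq_zero.mp h6
  have hrow' : ∀ (h : Matrix.symplecticGroup (Fin 3) (ZMod 2)), (h : M6) *ᵥ ee1 = ee1 →
      ∀ x, ((h : M6) *ᵥ x) (inr 0) = x (inr 0) := fun h hh x => hrowpres _ h.2 hh x
  have hstab : ∀ (h : Matrix.symplecticGroup (Fin 3) (ZMod 2)), (h : M6) *ᵥ ee1 = ee1 →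
      ρ h ws = ws := by
    intro h hh
    have h1 : ρ h ws = F (ρ h u1) := by
      rw [hwsdef, map_sub, hFapp]
      congr 1
      rw [← Module.End.mul_apply, ← _root_.map_mul, ← hcommG h hh, _root_.map_mul, Module.End.mul_apply]
    have h2 : (π (ρ h u1 - u1)) (inr 0) = 0 := by
      rw [map_sub, hπρ, hu1, Pi.sub_apply, hrow' h hh ff1, sub_self]
    have h3 : F (ρ h u1 - u1) = 0 := by rw [hFapp, keyA _ h2, sub_self]
    rw [map_sub] at h3
    have h4 : F (ρ h u1) = F u1 := sub_eq_zero.mp h3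
    rw [h1, h4, hFapp, ← hwsdef]
  -- fixed nonzero vector of S
  have hp : IsPGroup 2 ↥(S : Subgroup (Matrix.symplecticGroup (Fin 3) (ZMod 2))) := S.isPGroup'
  have hcard : ¬ (2 ∣ Nat.card {v : V6 // v ≠ 0}) := by rw [cardX]; norm_num
  obtain ⟨⟨a, ha0⟩, hafix⟩ := hp.nonempty_fixed_point_of_prime_not_dvd_card _ hcard
  have haS : ∀ g : ↥(S : Subgroup (Matrix.symplecticGroup (Fin 3) (ZMod 2))),
      ((g : Matrix.symplecticGroup (Fin 3) (ZMod 2)) : M6) *ᵥ a = a := by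
    intro g
    have h7 := MulAction.mem_fixedPoints.mp hafix g
    have h8 := congrArg Subtype.val h7
    rw [Subgroup.smul_def] at h8
    exact h8
  have hga' := hgmap a ha0
  set ga : Matrix.symplecticGroup (Fin 3) (ZMod 2) :=
    ⟨gmap a, SymplecticGroup.mem_iff.mpr hga'.1⟩ with hgadef
  have hga : (ga : M6) *ᵥ ee1 = a := hga'.2
  set wa : W := ρ ga ws with hwadef
  have hπwa : π wa = a := by rw [hwadef, hπρ, hπws, hga]
  have hwafix : ∀ g : Matrix.symplecticGroup (Fin 3) (ZMod 2),
      g ∈ (S : Subgroup (Matrix.symplecticGroup (Fin 3) (ZMod 2))) → ρ g wa = wa := by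
    intro g hg
    have hh1 : ((ga⁻¹ * g * ga : Matrix.symplecticGroup (Fin 3) (ZMod 2)) : M6) *ᵥ ee1 = ee1 := by
      rw [show ((ga⁻¹ * g * ga : Matrix.symplecticGroup (Fin 3) (ZMod 2)) : M6)
          = ((ga⁻¹ : Matrix.symplecticGroup (Fin 3) (ZMod 2)) : M6) * (g : M6) * (ga : M6)
          from rfl]
      rw [← Matrix.mulVec_mulVec, ← Matrix.mulVec_mulVec, hga, haS ⟨g, hg⟩, ← hga,
        Matrix.mulVec_mulVec,
        show ((ga⁻¹ : Matrix.symplecticGroup (Fin 3) (ZMod 2)) : M6) * (ga : M6)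
          = ((ga⁻¹ * ga : Matrix.symplecticGroup (Fin 3) (ZMod 2)) : M6) from rfl,
        inv_mul_cancel]
      simp
    have h2 : ρ (ga⁻¹ * g * ga) ws = ws := hstab _ hh1
    have hgg : g * ga = ga * (ga⁻¹ * g * ga) := by group
    have h9 : ρ g wa = ρ ga (ρ (ga⁻¹ * g * ga) ws) := by
      calc ρ g wa = ρ (g * ga) ws := by
            rw [hwadef, ← Module.End.mul_apply, ← _root_.map_mul]
        _ = ρ (ga * (ga⁻¹ * g * ga)) ws := by rw [hgg]
        _ = ρ ga (ρ (ga⁻¹ * g * ga) ws) := by rw [_root_.map_mul, Module.End.mul_apply]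
    rw [h9, h2, hwadef]
  have hne0 : wa ∉ (⨅ g : Matrix.symplecticGroup (Fin 3) (ZMod 2),
      LinearMap.eqLocus (ρ g) LinearMap.id : Submodule (ZMod 2) W) := by
    intro hmem
    exact ha0 (by rw [← hπwa, (hker wa).mpr hmem])
  have hle : (⨅ g : Matrix.symplecticGroup (Fin 3) (ZMod 2),
      LinearMap.eqLocus (ρ g) LinearMap.id : Submodule (ZMod 2) W) ≤ ⨅ g ∈ (S : Subgroup (Matrix.symplecticGroup (Fin 3) (ZMod 2))),
      LinearMap.eqLocus (ρ g) LinearMap.id := by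
    exact le_iInf fun g => le_iInf fun hg => iInf_le _ g
  have hmemWS : wa ∈ ⨅ g ∈ (S : Subgroup (Matrix.symplecticGroup (Fin 3) (ZMod 2))),
      LinearMap.eqLocus (ρ g) LinearMap.id := by
    rw [Submodule.mem_iInf]
    intro g
    rw [Submodule.mem_iInf]
    intro hg
    exact LinearMap.mem_eqLocus.mpr (hwafix g hg)
  have hlt : (⨅ g : Matrix.symplecticGroup (Fin 3) (ZMod 2),
      LinearMap.eqLocus (ρ g) LinearMap.id : Submodule (ZMod 2) W) < ⨅ g ∈ (S : Subgroup (Matrix.symplecticGroup (Fin 3) (ZMod 2))),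
      LinearMap.eqLocus (ρ g) LinearMap.id := by
    refine lt_of_le_of_ne hle fun hEq => hne0 ?_
    rw [hEq]
    exact hmemWS
  refine ⟨hlt, ?_⟩
  have hmono := Submodule.finrank_lt_finrank_of_lt hlt
  rw [hfix] at hmono
  omega
end

section
/- Let g be an F-linear automorphism of V such that for every v ∈ V, q(v) = 0 if and only if q(g v) = 0 (i.e. g stabilizes the set of singular 1-dimensional subspaces of V). Then g preserves q up to similarity: there exists a non-zero scalar c ∈ F such that q(g v) = c · q(v) for all v ∈ V. -/
open QuadraticMap

/-- Expansion of a quadratic form at `x + a • y`. -/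
private lemma qf_expand {F V : Type*} [Field F] [AddCommGroup V] [Module F V]
    (Q : QuadraticForm F V) (x y : V) (a : F) :
    Q (x + a • y) = Q x + a * a * Q y + a * polar (⇑Q) x y := by
  have h0 : Q (x + a • y) = Q x + Q (a • y) + polar (⇑Q) x (a • y) := by
    simp [QuadraticMap.polar]
  rw [h0, polar_smul_right, QuadraticMap.map_smul, smul_eq_mul, smul_eq_mul]

/-- Expansion of a quadratic form at `a • x + b • y`. -/
private lemma qf_expand2 {F V : Type*} [Field F] [AddCommGroup V] [Module F V]
    (Q : QuadraticForm F V) (x y : V) (a b : F) :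
    Q (a • x + b • y) = a * a * Q x + b * b * Q y + a * b * polar (⇑Q) x y := by
  rw [qf_expand, QuadraticMap.map_smul, smul_eq_mul, polar_smul_left, smul_eq_mul]
  ring

/-- Let `q` be a quadratic form on a finite-dimensional vector
space `V` over a field `F` with non-degenerate polar form and Witt index at least 1
(there is a non-zero singular vector).  If a linear automorphism `g` of `V`
stabilizes the set of singular vectors (`q v = 0 ↔ q (g v) = 0` for all `v`), then
`g` preserves `q` up to similarity: there is a non-zero scalar `c` with
`q (g v) = c * q v` for all `v`. -/
theorem stmt16 {F V : Type*} [Field F] [AddCommGroup V] [Module F V]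
    [FiniteDimensional F V]
    (q : QuadraticForm F V)
    (hnd : LinearMap.BilinForm.Nondegenerate q.polarBilin)
    (hwitt : ∃ v : V, v ≠ 0 ∧ q v = 0)
    (g : V ≃ₗ[F] V)
    (hg : ∀ v : V, q v = 0 ↔ q (g v) = 0) :
    ∃ c : F, c ≠ 0 ∧ ∀ v : V, q (g v) = c * q v := by
  classical
  obtain ⟨u, hu0, hqu⟩ := hwitt
  set q' : QuadraticForm F V := q.comp (g : V →ₗ[F] V) with hq'def
  have hq' : ∀ x : V, q' x = q (g x) := fun x => rfl
  have hg' : ∀ x : V, q x = 0 ↔ q' x = 0 := fun x => (hg x).trans (by rw [hq'])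
  -- find v₁ with polar q u v₁ ≠ 0
  obtain ⟨v₁, hv₁⟩ : ∃ w : V, polar (⇑q) u w ≠ 0 := by
    by_contra h
    push_neg at h
    exact hu0 (hnd.1 u fun n => by simpa using h n)
  -- normalize to get a hyperbolic pair u, v
  obtain ⟨v₂, huv₂⟩ : ∃ w : V, polar (⇑q) u w = 1 :=
    ⟨(polar (⇑q) u v₁)⁻¹ • v₁, by
      rw [polar_smul_right, smul_eq_mul, inv_mul_cancel₀ hv₁]⟩
  obtain ⟨v, hqv, huv⟩ : ∃ w : V, q w = 0 ∧ polar (⇑q) u w = 1 := by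
    refine ⟨v₂ + (-(q v₂)) • u, ?_, ?_⟩
    · rw [qf_expand, hqu, polar_comm, huv₂]; ring
    · have : polar (⇑q) u (v₂ + (-(q v₂)) • u) =
          polar (⇑q) u v₂ + (-(q v₂)) * polar (⇑q) u u := by
        rw [polar_add_right, polar_smul_right, smul_eq_mul]
      rw [this, huv₂, polar_self, hqu]
      simp
  -- singular vectors for q are singular for q'
  have hq'u : q' u = 0 := (hg' u).mp hqu
  have hq'v : q' v = 0 := (hg' v).mp hqv
  -- Key Lemma A: if z is q-singular and polar q z w = 0 then polar q' z w = 0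
  have hA : ∀ z w : V, q z = 0 → polar (⇑q) z w = 0 → polar (⇑q') z w = 0 := by
    intro z w hz hzw
    have hz' : q' z = 0 := (hg' z).mp hz
    by_contra ha
    have ha' : polar (⇑q') w z ≠ 0 := fun h => ha (by rw [polar_comm]; exact h)
    have hzw' : polar (⇑q) w z = 0 := by rw [polar_comm]; exact hzw
    -- with t := -q' w / polar q' w z, w + t • z is q'-singular
    have h2 : q' (w + (-(q' w) / polar (⇑q') w z) • z) = 0 := by
      rw [qf_expand, hz']
      field_simp
      ring
    have h3 : q (w + (-(q' w) / polar (⇑q') w z) • z) = q w := by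
      rw [qf_expand, hz, hzw']; ring
    have hqw : q w = 0 := by rw [← h3]; exact (hg' _).mpr h2
    have hq'w : q' w = 0 := (hg' w).mp hqw
    -- now w + z is q-singular but not q'-singular
    have h4 : q (w + (1 : F) • z) = 0 := by
      rw [qf_expand, hz, hzw', hqw]; ring
    have h5 : q' (w + (1 : F) • z) = 0 := (hg' _).mp h4
    rw [qf_expand, hz', hq'w] at h5
    exact ha' (by linear_combination h5)
  obtain ⟨c, hcdef⟩ : ∃ c : F, polar (⇑q') u v = c := ⟨_, rfl⟩
  have hc0 : c ≠ 0 := by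
    intro hc
    have h6 : q (u + (1 : F) • v) ≠ 0 := by
      rw [qf_expand, hqu, hqv, huv]; norm_num
    apply h6
    apply (hg' _).mpr
    rw [qf_expand, hq'u, hq'v, hcdef, hc]
    ring
  -- polar q' u w = c * polar q u w for all w
  have hPu : ∀ w : V, polar (⇑q') u w = c * polar (⇑q) u w := by
    intro w
    have h7 : polar (⇑q) u (w + (-(polar (⇑q) u w)) • v) = 0 := by
      rw [polar_add_right, polar_smul_right, huv, smul_eq_mul]; ring
    have h8 := hA u _ hqu h7
    rw [polar_add_right, polar_smul_right, smul_eq_mul, hcdef] at h8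
    linear_combination h8
  -- polar q' v w = c * polar q v w for all w
  have hPv : ∀ w : V, polar (⇑q') v w = c * polar (⇑q) v w := by
    intro w
    have hvu : polar (⇑q) v u = 1 := by rw [polar_comm]; exact huv
    have hcv : polar (⇑q') v u = c := by rw [polar_comm]; exact hcdef
    have h7 : polar (⇑q) v (w + (-(polar (⇑q) v w)) • u) = 0 := by
      rw [polar_add_right, polar_smul_right, hvu, smul_eq_mul]; ring
    have h8 := hA v _ hqv h7
    rw [polar_add_right, polar_smul_right, smul_eq_mul, hcv] at h8
    linear_combination h8
  -- Lemma B: if polar q u w ≠ 0 then q' w = c * q w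
  have hB : ∀ w : V, polar (⇑q) u w ≠ 0 → q' w = c * q w := by
    intro w hs
    have hwu : polar (⇑q) w u = polar (⇑q) u w := polar_comm _ _ _
    have hwu' : polar (⇑q') w u = c * polar (⇑q) u w := by
      rw [polar_comm]; exact hPu w
    have h9 : q ((polar (⇑q) u w) • w + (-(q w)) • u) = 0 := by
      rw [qf_expand2, hqu, hwu]; ring
    have h10 : q' ((polar (⇑q) u w) • w + (-(q w)) • u) = 0 := (hg' _).mp h9
    rw [qf_expand2, hq'u, hwu'] at h10
    have h11 : polar (⇑q) u w * polar (⇑q) u w * (q' w - c * q w) = 0 := by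
      linear_combination h10
    rcases mul_eq_zero.mp h11 with h | h
    · exact absurd (mul_self_eq_zero.mp h) hs
    · linear_combination h
  refine ⟨c, hc0, fun w => ?_⟩
  rw [← hq']
  by_cases hcase : polar (⇑q) u w ≠ 0
  · exact hB w hcase
  · push_neg at hcase
    have h11 : polar (⇑q) u (w + (1 : F) • v) ≠ 0 := by
      rw [polar_add_right, polar_smul_right, huv, hcase]; norm_num
    have h12 := hB _ h11
    rw [qf_expand, qf_expand, hq'v, hqv, polar_comm (⇑q') w v, polar_comm (⇑q) w v,
      hPv w] at h12
    linear_combination h12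
end

section
/- Assume [V,a] = C_V(b) and [V,b] = C_V(a), that these two subspaces are distinct and each has dimension 2 over ZMod p, and let v ∈ V with v ∉ [V,a] + [V,b]. Then there exists a quadratic form q on V whose polar form f(x,y) = q(x+y) − q(x) − q(y) is non-degenerate, which is invariant under a and b (q(a w) = q(w) and q(b w) = q(w) for all w ∈ V), and for which v is singular, i.e. q(v) = 0. -/
set_option maxHeartbeats 1000000

open Module LinearMap

lemma aux17 {p : ℕ} [hp : Fact (Nat.Prime p)]
    (N M : Module.End (ZMod p) (Fin 4 → ZMod p))
    (hNp : N ^ p = 0)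
    (hNM : LinearMap.range N = LinearMap.ker M)
    (hMN : LinearMap.range M = LinearMap.ker N)
    (hdN : Module.finrank (ZMod p) ↥(LinearMap.range N) = 2)
    (hdM : Module.finrank (ZMod p) ↥(LinearMap.range M) = 2)
    (hne : LinearMap.range N ≠ LinearMap.range M)
    (v : Fin 4 → ZMod p)
    (hv : v ∉ LinearMap.range N ⊔ LinearMap.range M) :
    (∀ x, N (N (N x)) = 0) ∧ N (N v) ≠ 0 := by
  have hVfin : finrank (ZMod p) (Fin 4 → ZMod p) = 4 := Module.finrank_fin_fun _
  have hsup_ne : LinearMap.range N ⊔ LinearMap.range M ≠ ⊤ := by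
    intro h; rw [h] at hv; exact hv Submodule.mem_top
  have hsuplt : finrank (ZMod p) ↥(LinearMap.range N ⊔ LinearMap.range M) < 4 := by
    have := Submodule.finrank_lt hsup_ne
    rwa [hVfin] at this
  have hsum := Submodule.finrank_sup_add_finrank_inf_eq (LinearMap.range N) (LinearMap.range M)
  have hsup3 : finrank (ZMod p) ↥(LinearMap.range N ⊔ LinearMap.range M) = 3 := by
    rcases lt_or_ge (finrank (ZMod p) ↥(LinearMap.range N ⊔ LinearMap.range M)) 3 with h | h
    · exfalso
      have e1 : LinearMap.range N = LinearMap.range N ⊔ LinearMap.range M :=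
        Submodule.eq_of_le_of_finrank_le le_sup_left (by omega)
      have e2 : LinearMap.range M = LinearMap.range N ⊔ LinearMap.range M :=
        Submodule.eq_of_le_of_finrank_le le_sup_right (by omega)
      exact hne (e1.trans e2.symm)
    · omega
  have hinf1 : finrank (ZMod p) ↥(LinearMap.range N ⊓ LinearMap.range M) = 1 := by omega
  -- the compositions vanish
  have hNMz : ∀ x, N (M x) = 0 := by
    intro x
    have h1 : M x ∈ LinearMap.range M := LinearMap.mem_range_self M x
    rw [hMN] at h1; exact h1
  have hMNz : ∀ x, M (N x) = 0 := by
    intro x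
    have h1 : N x ∈ LinearMap.range N := LinearMap.mem_range_self N x
    rw [hNM] at h1; exact h1
  -- U = N(range N) has dimension 1
  set U : Submodule (ZMod p) (Fin 4 → ZMod p) := (LinearMap.range N).map N with hU
  have hUle : U ≤ LinearMap.range N := by
    rintro _ ⟨x, -, rfl⟩; exact LinearMap.mem_range_self N x
  have hU1 : finrank (ZMod p) ↥U = 1 := by
    have hrn := LinearMap.finrank_range_add_finrank_ker (N.domRestrict (LinearMap.range N))
    have hr : LinearMap.range (N.domRestrict (LinearMap.range N)) = U :=
      LinearMap.range_domRestrict _ _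
    have hker : LinearMap.ker (N.domRestrict (LinearMap.range N)) =
        (LinearMap.range N ⊓ LinearMap.range M).comap (LinearMap.range N).subtype := by
      rw [LinearMap.ker_domRestrict, ← hMN]
      rw [Submodule.comap_inf, Submodule.comap_subtype_self, top_inf_eq]
    have hkrank : finrank (ZMod p) ↥(LinearMap.ker (N.domRestrict (LinearMap.range N))) = 1 := by
      rw [hker, (Submodule.comapSubtypeEquivOfLe inf_le_left).finrank_eq]
      exact hinf1
    rw [hr, hkrank, hdN] at hrn
    omega
  -- N^3 = 0
  have hNUU : U.map N ≤ U := by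
    have := Submodule.map_mono (f := N) hUle
    exact this
  have hN3 : ∀ x, N (N (N x)) = 0 := by
    by_cases hcase : U.map N = U
    · exfalso
      have hiter : ∀ k, U.map (N ^ k) = U := by
        intro k; induction k with
        | zero => rw [pow_zero, Module.End.one_eq_id]; exact Submodule.map_id U
        | succ k ih =>
          rw [pow_succ', Module.End.mul_eq_comp, Submodule.map_comp, ih, hcase]
      have h0 := hiter p
      rw [hNp] at h0
      have hUbot : U ≠ ⊥ := by
        intro h; rw [h] at hU1; simp at hU1
      obtain ⟨u, hu, hune⟩ := Submodule.exists_mem_ne_zero_of_ne_bot hUbot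
      rw [← h0] at hu
      obtain ⟨x, -, hx⟩ := hu
      exact hune (by rw [← hx]; rfl)
    · have hlt : U.map N < U := lt_of_le_of_ne hNUU hcase
      have hrk : finrank (ZMod p) ↥(U.map N) < 1 := by
        rw [← hU1]; exact Submodule.finrank_lt_finrank_of_lt hlt
      have hbot : U.map N = ⊥ := Submodule.finrank_eq_zero.mp (by omega)
      intro x
      have h2 : N (N x) ∈ U := Submodule.mem_map_of_mem (LinearMap.mem_range_self N x)
      have h3 : N (N (N x)) ∈ U.map N := Submodule.mem_map_of_mem h2
      rw [hbot] at h3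
      exact h3
  refine ⟨hN3, ?_⟩
  -- N^2 ≠ 0
  have hN2ne : ∃ x, N (N x) ≠ 0 := by
    by_contra h; push_neg at h
    have hle : LinearMap.range N ≤ LinearMap.range M := by
      rw [hMN]; rintro _ ⟨x, rfl⟩; exact h x
    exact hne (Submodule.eq_of_le_of_finrank_le hle (by omega))
  -- ker (N ∘ N) = range N ⊔ range M
  have hK2 : LinearMap.range N ⊔ LinearMap.range M ≤ LinearMap.ker (N ∘ₗ N) := by
    apply sup_le
    · rintro _ ⟨x, rfl⟩; exact LinearMap.mem_ker.mpr (hN3 x)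
    · intro x hx
      rw [hMN] at hx
      exact LinearMap.mem_ker.mpr (by rw [LinearMap.comp_apply, LinearMap.mem_ker.mp hx, map_zero])
  have hK2ne : LinearMap.ker (N ∘ₗ N) ≠ ⊤ := by
    obtain ⟨x, hx⟩ := hN2ne
    intro h
    exact hx (LinearMap.mem_ker.mp (h ▸ Submodule.mem_top : x ∈ LinearMap.ker (N ∘ₗ N)))
  have hK2lt : finrank (ZMod p) ↥(LinearMap.ker (N ∘ₗ N)) < 4 := by
    have := Submodule.finrank_lt hK2ne
    rwa [hVfin] at this
  have heq : LinearMap.range N ⊔ LinearMap.range M = LinearMap.ker (N ∘ₗ N) :=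
    Submodule.eq_of_le_of_finrank_le hK2 (by omega)
  intro h
  apply hv
  rw [heq]
  exact LinearMap.mem_ker.mpr (by rw [LinearMap.comp_apply, h])

/-- Let `p` be an odd prime, `V = Fin 4 → ZMod p`, and let `a`,
`b` be commuting linear automorphisms of `V` of order dividing `p` generating an
elementary abelian group of order `p²`, with `[V,a] = C_V(b)` and `[V,b] = C_V(a)`
distinct of dimension 2.  If `v ∉ [V,a] + [V,b]`, then there is a quadratic form on
`V` with non-degenerate polar form, invariant under `a` and `b`, for which `v` is
singular. -/
theorem stmt17 (p : ℕ) [hp : Fact (Nat.Prime p)] (hodd : Odd p)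
    (a b : (Fin 4 → ZMod p) ≃ₗ[ZMod p] (Fin 4 → ZMod p))
    (hcomm : a * b = b * a)
    (hap : a ^ p = 1) (hbp : b ^ p = 1)
    (hcard : Nat.card (Subgroup.closure {a, b} :
      Subgroup ((Fin 4 → ZMod p) ≃ₗ[ZMod p] (Fin 4 → ZMod p))) = p ^ 2)
    (hVaCb : LinearMap.range (a.toLinearMap - LinearMap.id) =
      LinearMap.ker (b.toLinearMap - LinearMap.id))
    (hVbCa : LinearMap.range (b.toLinearMap - LinearMap.id) =
      LinearMap.ker (a.toLinearMap - LinearMap.id))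
    (hne : LinearMap.range (a.toLinearMap - LinearMap.id) ≠
      LinearMap.range (b.toLinearMap - LinearMap.id))
    (hdima : Module.finrank (ZMod p) ↥(LinearMap.range (a.toLinearMap - LinearMap.id)) = 2)
    (hdimb : Module.finrank (ZMod p) ↥(LinearMap.range (b.toLinearMap - LinearMap.id)) = 2)
    (v : Fin 4 → ZMod p)
    (hv : v ∉ LinearMap.range (a.toLinearMap - LinearMap.id) ⊔
      LinearMap.range (b.toLinearMap - LinearMap.id)) :
    ∃ q : QuadraticForm (ZMod p) (Fin 4 → ZMod p),
      LinearMap.BilinForm.Nondegenerate q.polarBilin ∧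
      (∀ w, q (a w) = q w) ∧
      (∀ w, q (b w) = q w) ∧
      q v = 0 := by
  classical
  set N : Module.End (ZMod p) (Fin 4 → ZMod p) := a.toLinearMap - LinearMap.id with hNdef
  set M : Module.End (ZMod p) (Fin 4 → ZMod p) := b.toLinearMap - LinearMap.id with hMdef
  haveI : CharP (Module.End (ZMod p) (Fin 4 → ZMod p)) p :=
    charP_of_injective_algebraMap' (ZMod p) p
  have hpowN : ∀ (c : (Fin 4 → ZMod p) ≃ₗ[ZMod p] (Fin 4 → ZMod p)), c ^ p = 1 →
      (c.toLinearMap - LinearMap.id) ^ p = 0 := by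
    intro c hc
    have h1 : c.toLinearMap ^ p = 1 := by
      have := congrArg (LinearEquiv.automorphismGroup.toLinearMapMonoidHom) hc
      rwa [map_pow, map_one] at this
    have h2 : (LinearMap.id : Module.End (ZMod p) (Fin 4 → ZMod p)) = 1 := rfl
    rw [h2, sub_pow_char_of_commute p (Commute.one_right _), h1, one_pow, sub_self]
  have hNp : N ^ p = 0 := hpowN a hap
  have hMp : M ^ p = 0 := hpowN b hbp
  obtain ⟨hN3, hN2v⟩ := aux17 N M hNp hVaCb hVbCa hdima hdimb hne v hv
  obtain ⟨hM3, hM2v⟩ := aux17 M N hMp hVbCa hVaCb hdimb hdima (Ne.symm hne) v (by rwa [sup_comm])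
  have hNMz : ∀ x, N (M x) = 0 := by
    intro x
    have h1 : M x ∈ LinearMap.range M := LinearMap.mem_range_self M x
    rw [hVbCa] at h1; exact h1
  have hMNz : ∀ x, M (N x) = 0 := by
    intro x
    have h1 : N x ∈ LinearMap.range N := LinearMap.mem_range_self N x
    rw [hVaCb] at h1; exact h1
  set e1 : Fin 4 → ZMod p := N (N v) with he1
  set e2 : Fin 4 → ZMod p := N v with he2
  -- e1 spans range N ⊓ range M ; M (M v) = γ • e1
  have hinf1 : finrank (ZMod p) ↥(LinearMap.range N ⊓ LinearMap.range M) = 1 := by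
    have hVfin : finrank (ZMod p) (Fin 4 → ZMod p) = 4 := Module.finrank_fin_fun _
    have hsup_ne : LinearMap.range N ⊔ LinearMap.range M ≠ ⊤ := by
      intro h; rw [h] at hv; exact hv Submodule.mem_top
    have hsuplt : finrank (ZMod p) ↥(LinearMap.range N ⊔ LinearMap.range M) < 4 := by
      have := Submodule.finrank_lt hsup_ne
      rwa [hVfin] at this
    have hsum := Submodule.finrank_sup_add_finrank_inf_eq (LinearMap.range N) (LinearMap.range M)
    have hsup3 : finrank (ZMod p) ↥(LinearMap.range N ⊔ LinearMap.range M) = 3 := by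
      rcases lt_or_ge (finrank (ZMod p) ↥(LinearMap.range N ⊔ LinearMap.range M)) 3 with h | h
      · exfalso
        have f1 : LinearMap.range N = LinearMap.range N ⊔ LinearMap.range M :=
          Submodule.eq_of_le_of_finrank_le le_sup_left (by omega)
        have f2 : LinearMap.range M = LinearMap.range N ⊔ LinearMap.range M :=
          Submodule.eq_of_le_of_finrank_le le_sup_right (by omega)
        exact hne (f1.trans f2.symm)
      · omega
    omega
  have he1mem : e1 ∈ LinearMap.range N ⊓ LinearMap.range M := by
    refine ⟨LinearMap.mem_range_self N (N v), ?_⟩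
    rw [hVbCa]; exact LinearMap.mem_ker.mpr (hN3 v)
  have he1'mem : M (M v) ∈ LinearMap.range N ⊓ LinearMap.range M := by
    refine ⟨?_, LinearMap.mem_range_self M (M v)⟩
    rw [hVaCb]; exact LinearMap.mem_ker.mpr (hM3 v)
  have hspan : Submodule.span (ZMod p) {e1} = LinearMap.range N ⊓ LinearMap.range M := by
    apply Submodule.eq_of_le_of_finrank_le
    · rw [Submodule.span_le, Set.singleton_subset_iff]; exact he1mem
    · rw [hinf1, finrank_span_singleton hN2v]
  obtain ⟨γ, hγ⟩ : ∃ γ : ZMod p, γ • e1 = M (M v) := by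
    have := he1'mem
    rw [← hspan, Submodule.mem_span_singleton] at this
    exact this
  have hγne : γ ≠ 0 := by
    intro h; rw [h, zero_smul] at hγ; exact hM2v hγ.symm
  set e3 : Fin 4 → ZMod p := M v with he3
  -- action facts
  have hNe1 : N e1 = 0 := hN3 v
  have hNe2 : N e2 = e1 := rfl
  have hNe3 : N e3 = 0 := hNMz v
  have hNv : N v = e2 := rfl
  have hMe1 : M e1 = 0 := hMNz (N v)
  have hMe2 : M e2 = 0 := hMNz v
  have hMe3 : M e3 = γ • e1 := hγ.symm
  have hMv : M v = e3 := rfl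
  -- linear independence and basis
  have he1ana : e1 ∈ LinearMap.range N := he1mem.1
  have hind : LinearIndependent (ZMod p) ![e1, e2, e3, v] := by
    rw [Fintype.linearIndependent_iff]
    intro g hg
    rw [Fin.sum_univ_four] at hg
    simp only [Matrix.cons_val_zero, Matrix.cons_val_one, Matrix.head_cons,
      Matrix.cons_val_two, Matrix.tail_cons, Matrix.cons_val_three] at hg
    have hg3 : g 3 = 0 := by
      by_contra h3
      apply hv
      have hmem : g 3 • v = -(g 0 • e1 + g 1 • e2 + g 2 • e3) := by
        rw [eq_neg_iff_add_eq_zero, ← hg]; abel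
      have hin : g 3 • v ∈ LinearMap.range N ⊔ LinearMap.range M := by
        rw [hmem]
        apply Submodule.neg_mem
        refine Submodule.add_mem _ (Submodule.add_mem _ ?_ ?_) ?_
        · exact Submodule.mem_sup_left (Submodule.smul_mem _ _ he1ana)
        · exact Submodule.mem_sup_left (Submodule.smul_mem _ _ (LinearMap.mem_range_self N v))
        · exact Submodule.mem_sup_right (Submodule.smul_mem _ _ (LinearMap.mem_range_self M v))
      have : v = (g 3)⁻¹ • (g 3 • v) := by rw [smul_smul, inv_mul_cancel₀ h3, one_smul]
      rw [this]
      exact Submodule.smul_mem _ _ hin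
    rw [hg3, zero_smul, add_zero] at hg
    have hg1 : g 1 = 0 := by
      have := congrArg N hg
      rw [map_add, map_add, map_smul, map_smul, map_smul, hNe1, hNe2, hNe3, map_zero,
        smul_zero, smul_zero, zero_add, add_zero] at this
      rcases smul_eq_zero.mp this with h | h
      · exact h
      · exact absurd h hN2v
    have hg2 : g 2 = 0 := by
      have hMhg := congrArg M hg
      rw [map_add, map_add, map_smul, map_smul, map_smul, hMe1, hMe2, hMe3, map_zero,
        smul_zero, smul_zero, zero_add, zero_add, smul_smul] at hMhg
      rcases smul_eq_zero.mp hMhg with h | h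
      · exact (mul_eq_zero.mp h).resolve_right hγne
      · exact absurd h hN2v
    rw [hg1, hg2, zero_smul, zero_smul, add_zero, add_zero] at hg
    have hg0 : g 0 = 0 := by
      rcases smul_eq_zero.mp hg with h | h
      · exact h
      · exact absurd h hN2v
    intro i; fin_cases i <;> assumption
  have hcard4 : Fintype.card (Fin 4) = finrank (ZMod p) (Fin 4 → ZMod p) := by
    rw [Module.finrank_fin_fun, Fintype.card_fin]
  let bas : Basis (Fin 4) (ZMod p) (Fin 4 → ZMod p) :=
    basisOfLinearIndependentOfCardEqFinrank hind hcard4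
  have hbas : ⇑bas = ![e1, e2, e3, v] := coe_basisOfLinearIndependentOfCardEqFinrank hind hcard4
  have hb0 : bas 0 = e1 := by rw [hbas]; rfl
  have hb1 : bas 1 = e2 := by rw [hbas]; rfl
  have hb2 : bas 2 = e3 := by rw [hbas]; rfl
  have hb3 : bas 3 = v := by rw [hbas]; rfl
  -- the quadratic form
  have htwo : (2 : ZMod p) ≠ 0 := by
    intro h
    have h2 : ((2 : ℕ) : ZMod p) = 0 := by exact_mod_cast h
    rw [ZMod.natCast_eq_zero_iff] at h2
    have := (Nat.prime_dvd_prime_iff_eq hp.out Nat.prime_two).mp h2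
    rcases hodd with ⟨k, hk⟩; omega
  set G : Matrix (Fin 4) (Fin 4) (ZMod p) :=
    !![0, 0, 0, 2;
       0, -2, 0, 1;
       0, 0, -(2*γ), γ;
       2, 1, γ, 0] with hG
  set F : LinearMap.BilinForm (ZMod p) (Fin 4 → ZMod p) := Matrix.toBilin bas G with hFdef
  have hFmat : LinearMap.BilinForm.toMatrix bas F = G := (LinearMap.BilinForm.toMatrix bas).apply_symm_apply G
  have hFb : ∀ i j, F (bas i) (bas j) = G i j := by
    intro i j; rw [← hFmat, LinearMap.BilinForm.toMatrix_apply]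
  have hinv : ∀ (T : Module.End (ZMod p) (Fin 4 → ZMod p)),
      (∀ i j, F (T (bas i)) (T (bas j)) = F (bas i) (bas j)) → ∀ x y, F (T x) (T y) = F x y := by
    intro T hT x y
    have heq : F.compl₁₂ T T = F := by
      refine bas.ext fun i => LinearMap.ext_on_range (Basis.span_eq bas) fun j => ?_
      simpa [LinearMap.compl₁₂_apply] using hT i j
    have := LinearMap.congr_fun (LinearMap.congr_fun heq x) y
    simpa [LinearMap.compl₁₂_apply] using this
  have hNb0 : N (bas 0) = 0 := by rw [hb0]; try exact hNe1
  have hNb1 : N (bas 1) = bas 0 := by rw [hb0, hb1]; try exact hNe2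
  have hNb2 : N (bas 2) = 0 := by rw [hb2]; try exact hNe3
  have hNb3 : N (bas 3) = bas 1 := by rw [hb1, hb3]; try exact hNv
  have hMb0 : M (bas 0) = 0 := by rw [hb0]; try exact hMe1
  have hMb1 : M (bas 1) = 0 := by rw [hb1]; try exact hMe2
  have hMb2 : M (bas 2) = γ • bas 0 := by rw [hb0, hb2]; try exact hMe3
  have hMb3 : M (bas 3) = bas 2 := by rw [hb2, hb3]; try exact hMv
  have haapp : ∀ x, a.toLinearMap x = x + N x := by
    intro x; rw [hNdef]; simp
  have hbapp : ∀ x, b.toLinearMap x = x + M x := by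
    intro x; rw [hMdef]; simp
  have hF00 : F (bas 0) (bas 0) = 0 := by rw [hFb]; norm_num [hG]
  have hF01 : F (bas 0) (bas 1) = 0 := by rw [hFb]; norm_num [hG]
  have hF02 : F (bas 0) (bas 2) = 0 := by rw [hFb]; norm_num [hG] <;> rfl
  have hF03 : F (bas 0) (bas 3) = 2 := by rw [hFb]; norm_num [hG] <;> rfl
  have hF10 : F (bas 1) (bas 0) = 0 := by rw [hFb]; norm_num [hG]
  have hF11 : F (bas 1) (bas 1) = -2 := by rw [hFb]; norm_num [hG]
  have hF12 : F (bas 1) (bas 2) = 0 := by rw [hFb]; norm_num [hG] <;> rfl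
  have hF13 : F (bas 1) (bas 3) = 1 := by rw [hFb]; norm_num [hG] <;> rfl
  have hF20 : F (bas 2) (bas 0) = 0 := by rw [hFb]; norm_num [hG] <;> rfl
  have hF21 : F (bas 2) (bas 1) = 0 := by rw [hFb]; norm_num [hG] <;> rfl
  have hF22 : F (bas 2) (bas 2) = -(2*γ) := by rw [hFb]; norm_num [hG] <;> rfl
  have hF23 : F (bas 2) (bas 3) = γ := by rw [hFb]; norm_num [hG] <;> rfl
  have hF30 : F (bas 3) (bas 0) = 2 := by rw [hFb]; norm_num [hG] <;> rfl
  have hF31 : F (bas 3) (bas 1) = 1 := by rw [hFb]; norm_num [hG] <;> rfl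
  have hF32 : F (bas 3) (bas 2) = γ := by rw [hFb]; norm_num [hG] <;> rfl
  have hF33 : F (bas 3) (bas 3) = 0 := by rw [hFb]; norm_num [hG] <;> rfl
  have hainv : ∀ x y, F (a.toLinearMap x) (a.toLinearMap y) = F x y := by
    apply hinv
    intro i j
    rw [haapp, haapp]
    fin_cases i <;> fin_cases j <;>
      simp only [Fin.zero_eta, Fin.mk_one, Fin.reduceFinMk, Fin.isValue, map_add,
        LinearMap.add_apply, hNb0, hNb1, hNb2, hNb3, add_zero, map_zero, LinearMap.zero_apply,
        hF00, hF01, hF02, hF03, hF10, hF11, hF12, hF13, hF20, hF21, hF22, hF23, hF30, hF31,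
        hF32, hF33] <;>
      ring
  have hbinv : ∀ x y, F (b.toLinearMap x) (b.toLinearMap y) = F x y := by
    apply hinv
    intro i j
    rw [hbapp, hbapp]
    fin_cases i <;> fin_cases j <;>
      simp only [Fin.zero_eta, Fin.mk_one, Fin.reduceFinMk, Fin.isValue, map_add,
        LinearMap.add_apply, hMb0, hMb1, hMb2, hMb3, add_zero, map_zero, LinearMap.zero_apply,
        map_smul, LinearMap.smul_apply, smul_eq_mul,
        hF00, hF01, hF02, hF03, hF10, hF11, hF12, hF13, hF20, hF21, hF22, hF23, hF30, hF31,
        hF32, hF33] <;>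
      ring
  refine ⟨LinearMap.BilinMap.toQuadraticMap F, ?_, ?_, ?_, ?_⟩
  · -- nondegenerate polar form
    refine LinearMap.BilinForm.Nondegenerate.ofSeparatingLeft ?_
    intro x hx
    have hx' : ∀ y, F x y + F y x = 0 := by
      intro y
      have h0 := hx y
      rwa [QuadraticMap.polarBilin_apply_apply,
        LinearMap.BilinMap.polar_toQuadraticMap] at h0
    have hrep := bas.sum_repr x
    rw [Fin.sum_univ_four] at hrep
    have key : ∀ j : Fin 4,
        F (bas.repr x 0 • bas 0 + bas.repr x 1 • bas 1 + bas.repr x 2 • bas 2 +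
          bas.repr x 3 • bas 3) (bas j) +
        F (bas j) (bas.repr x 0 • bas 0 + bas.repr x 1 • bas 1 + bas.repr x 2 • bas 2 +
          bas.repr x 3 • bas 3) = 0 := by
      intro j; rw [hrep]; exact hx' (bas j)
    have h0 := key 0
    have h1 := key 1
    have h2 := key 2
    have h3 := key 3
    simp only [map_add, map_smul, LinearMap.add_apply, LinearMap.smul_apply, smul_eq_mul,
      hF00, hF01, hF02, hF03, hF10, hF11, hF12, hF13, hF20, hF21, hF22, hF23, hF30, hF31,
      hF32, hF33] at h0 h1 h2 h3
    have hfour : (2 : ZMod p) * 2 ≠ 0 := mul_ne_zero htwo htwo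
    have hc3 : bas.repr x 3 = 0 := by
      have h4 : (2 * 2 : ZMod p) * bas.repr x 3 = 0 := by linear_combination h0
      exact (mul_eq_zero.mp h4).resolve_left hfour
    have hc1 : bas.repr x 1 = 0 := by
      have h4 : (2 * 2 : ZMod p) * bas.repr x 1 = 0 := by linear_combination -h1 + 2 * hc3
      exact (mul_eq_zero.mp h4).resolve_left hfour
    have hc2 : bas.repr x 2 = 0 := by
      have h4 : (γ * (2 * 2) : ZMod p) * bas.repr x 2 = 0 := by
        linear_combination -h2 + 2 * γ * hc3
      exact (mul_eq_zero.mp h4).resolve_left (mul_ne_zero hγne hfour)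
    have hc0 : bas.repr x 0 = 0 := by
      have h4 : (2 * 2 : ZMod p) * bas.repr x 0 = 0 := by
        linear_combination h3 - 2 * hc1 - 2 * γ * hc2
      exact (mul_eq_zero.mp h4).resolve_left hfour
    have hz : bas.repr x = 0 := by
      ext i
      fin_cases i <;>
        simp only [Fin.zero_eta, Fin.mk_one, Fin.reduceFinMk, Fin.isValue, Finsupp.coe_zero,
          Pi.zero_apply] <;>
        assumption
    exact bas.repr.map_eq_zero_iff.mp hz
  · intro w
    have h := hainv w w
    simp only [LinearMap.BilinMap.toQuadraticMap_apply]
    exact h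
  · intro w
    have h := hbinv w w
    simp only [LinearMap.BilinMap.toQuadraticMap_apply]
    exact h
  · have h := hF33
    rw [hb3] at h
    simpa using h
end
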